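/- arXiv:2206.10347 — 6 statements merged into one kernel-verified Lean document; each statement's English description precedes it below -/
import Mathlib

section
/- For a set-valued mapping F between metric spaces and a point (x̄,ȳ) in its graph, the regularity modulus of F at (x̄,ȳ) equals the reciprocal of the Lipschitz modulus of F⁻¹ at (ȳ,x̄); that is, rg F(x̄,ȳ) = (lip F⁻¹(ȳ,x̄))⁻¹ (with the convention 1/∞ = 0 and 1/0 = ∞). -/
open EMetric ENNReal Set

variable {X Y : Type*} [MetricSpace X] [MetricSpace Y]

/-- The inverse of a set-valued mapping. -/
def svInv (F : X → Set Y) (y : Y) : Set X := {x | y ∈ F x}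

/-- The (metric) regularity modulus of `F` at `(xb, yb)`: the supremum of all `α`
such that `α · d(x, F⁻¹(y)) ≤ d(y, F(x))` for all `(x, y)` near `(xb, yb)`. -/
noncomputable def rgMod (F : X → Set Y) (xb : X) (yb : Y) : ℝ≥0∞ :=
  sSup {α : ℝ≥0∞ | ∃ δ : ℝ≥0∞, 0 < δ ∧ ∀ x y, edist x xb < δ → edist y yb < δ →
    α * infEdist x (svInv F y) ≤ infEdist y (F x)}

/-- The Lipschitz modulus of `F⁻¹` at `(yb, xb)`: the infimum of all `α`
such that `d(x, F⁻¹(y)) ≤ α · d(y, y')` for all `y, y'` near `yb` and `x ∈ F⁻¹(y')` near `xb`. -/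
noncomputable def lipModInv (F : X → Set Y) (xb : X) (yb : Y) : ℝ≥0∞ :=
  sInf {α : ℝ≥0∞ | ∃ δ : ℝ≥0∞, 0 < δ ∧ ∀ y y' x, edist y yb < δ → edist y' yb < δ →
    x ∈ svInv F y' → edist x xb < δ →
    infEdist x (svInv F y) ≤ α * edist y y'}

/-- Auxiliary: if `α` witnesses the regularity estimate, then `α⁻¹` witnesses the
Lipschitz estimate for the inverse. -/
theorem lipModInv_le_inv_of_mem (F : X → Set Y) (xb : X) (yb : Y) (α δ : ℝ≥0∞)
    (hδ : 0 < δ)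
    (hT : ∀ x y, edist x xb < δ → edist y yb < δ →
      α * infEdist x (svInv F y) ≤ infEdist y (F x)) :
    lipModInv F xb yb ≤ α⁻¹ := by
  apply sInf_le
  refine ⟨δ, hδ, fun y y' x h1 h2 hx h3 => ?_⟩
  have hx' : y' ∈ F x := hx
  have hkey : α * infEdist x (svInv F y) ≤ infEdist y (F x) := hT x y h3 h1
  have h4 : infEdist y (F x) ≤ edist y y' := infEdist_le_edist_of_mem hx'
  by_cases hα0 : α = 0
  · subst hα0
    by_cases hyy : edist y y' = 0
    · have : y = y' := by rwa [edist_eq_zero] at hyy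
      subst this
      have : infEdist x (svInv F y) = 0 := infEdist_zero_of_mem hx
      simp [this]
    · rw [ENNReal.inv_zero, ENNReal.top_mul hyy]
      exact le_top
  by_cases hαtop : α = ⊤
  · subst hαtop
    have hfin : edist y y' ≠ ⊤ := edist_ne_top y y'
    have h0 : infEdist x (svInv F y) = 0 := by
      by_contra hne
      have : (⊤ : ℝ≥0∞) ≤ edist y y' := by
        rw [← ENNReal.top_mul hne]
        exact hkey.trans h4
      exact hfin (top_le_iff.mp this)
    simp [h0]
  · calc infEdist x (svInv F y) = α⁻¹ * (α * infEdist x (svInv F y)) := by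
          rw [← mul_assoc, ENNReal.inv_mul_cancel hα0 hαtop, one_mul]
    _ ≤ α⁻¹ * edist y y' := mul_le_mul_right (hkey.trans h4) _

/-- Auxiliary: if `α` witnesses the Lipschitz estimate for the inverse and `β < α⁻¹`,
then `β` witnesses the regularity estimate. -/
theorem mem_rg_of_lt_inv (F : X → Set Y) (xb : X) (yb : Y) (h : yb ∈ F xb)
    (α β δ : ℝ≥0∞) (hδ : 0 < δ)
    (hS : ∀ y y' x, edist y yb < δ → edist y' yb < δ →
      x ∈ svInv F y' → edist x xb < δ →
      infEdist x (svInv F y) ≤ α * edist y y')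
    (hβ : β < α⁻¹) :
    ∃ δ' : ℝ≥0∞, 0 < δ' ∧ ∀ x y, edist x xb < δ' → edist y yb < δ' →
      β * infEdist x (svInv F y) ≤ infEdist y (F x) := by
  have hβtop : β ≠ ⊤ := hβ.ne_top
  have hαtop : α ≠ ⊤ := by
    intro hc; rw [hc, ENNReal.inv_top] at hβ; exact (not_lt_bot hβ)
  have hβα : β * α < 1 := by
    by_cases hα0 : α = 0
    · simp [hα0]
    · have := ENNReal.mul_lt_mul_left hα0 hαtop hβ
      rwa [ENNReal.inv_mul_cancel hα0 hαtop] at this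
  -- shrink δ to a finite value
  set δ₀ : ℝ≥0∞ := min δ 1 with hδ₀def
  have hδ₀pos : 0 < δ₀ := lt_min hδ zero_lt_one
  have hδ₀δ : δ₀ ≤ δ := min_le_left _ _
  have hδ₀top : δ₀ ≠ ⊤ := ne_top_of_le_ne_top one_ne_top (min_le_right _ _)
  set t : ℝ≥0∞ := δ₀ / 4 with htdef
  have ht0 : t ≠ 0 := (ENNReal.div_pos hδ₀pos.ne' (by norm_num)).ne'
  have h4t : 4 * t = δ₀ := ENNReal.mul_div_cancel' (by norm_num) (by norm_num)
  have httop : t ≠ ⊤ := (ENNReal.div_lt_top hδ₀top (by norm_num)).ne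
  have ht_le : t ≤ δ₀ := by
    calc t = 1 * t := (one_mul t).symm
    _ ≤ 4 * t := mul_le_mul_left (by norm_num) t
    _ = δ₀ := h4t
  set c : ℝ≥0∞ := β * α + β + 1 with hcdef
  have hc0 : c ≠ 0 := by
    intro hc
    have : (1 : ℝ≥0∞) ≤ 0 := hc ▸ le_add_self
    exact one_ne_zero (le_antisymm this zero_le)
  have hctop : c ≠ ⊤ :=
    ENNReal.add_ne_top.mpr ⟨ENNReal.add_ne_top.mpr ⟨hβα.ne_top, hβtop⟩, one_ne_top⟩
  refine ⟨t / c, ENNReal.div_pos ht0 hctop, fun x y hx hy => ?_⟩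
  have hδ't : t / c ≤ t := by
    have h1c : (1 : ℝ≥0∞) ≤ c := le_add_self
    calc t / c ≤ t / 1 := ENNReal.div_le_div_left h1c t
    _ = t := by rw [div_one]
  have hδ'δ : t / c ≤ δ := hδ't.trans (ht_le.trans hδ₀δ)
  have hxδ : edist x xb < δ := hx.trans_le hδ'δ
  have hyδ : edist y yb < δ := hy.trans_le hδ'δ
  rcases le_or_gt t (infEdist y (F x)) with hcase | hcase
  · -- far case: use the bound via xb
    have hxb : infEdist xb (svInv F y) ≤ α * edist y yb := by
      have := hS y yb xb hyδ (by simpa using hδ) h (by simpa using hδ)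
      simpa using this
    have hbound : infEdist x (svInv F y) ≤ α * edist y yb + edist x xb :=
      (infEdist_le_infEdist_add_edist).trans (add_le_add_left hxb _)
    have hbound2 : infEdist x (svInv F y) ≤ α * (t / c) + t / c := by
      refine hbound.trans (add_le_add (mul_le_mul_right hy.le _) hx.le)
    calc β * infEdist x (svInv F y) ≤ β * (α * (t / c) + t / c) :=
          mul_le_mul_right hbound2 _
    _ = (β * α + β) * (t / c) := by ring
    _ ≤ c * (t / c) := mul_le_mul_left (self_le_add_right _ _) _
    _ = t := ENNReal.mul_div_cancel hc0 hctop
    _ ≤ infEdist y (F x) := hcase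
  · -- near case: pick a close point y' ∈ F x
    apply ENNReal.le_of_forall_pos_le_add
    intro ε hε _
    set ε' : ℝ≥0∞ := min (ε : ℝ≥0∞) t with hε'def
    have hε'0 : ε' ≠ 0 := by
      have : (0 : ℝ≥0∞) < ε' := lt_min (by exact_mod_cast hε) (zero_lt_iff.mpr ht0)
      exact this.ne'
    have hinftop : infEdist y (F x) ≠ ⊤ := (hcase.trans_le le_top).ne_top
    have hlt : infEdist y (F x) < infEdist y (F x) + ε' :=
      ENNReal.lt_add_right hinftop hε'0
    obtain ⟨y', hy'mem, hy'⟩ := infEdist_lt_iff.mp hlt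
    have hyy' : edist y y' < t + t := by
      calc edist y y' < infEdist y (F x) + ε' := hy'
      _ ≤ infEdist y (F x) + t := add_le_add_right (min_le_right _ _) _
      _ < t + t := by
          exact ENNReal.add_lt_add_right httop hcase
    have hy'yb : edist y' yb < δ := by
      have h3t : edist y' yb < t + t + t := by
        calc edist y' yb ≤ edist y' y + edist y yb := edist_triangle _ _ _
        _ = edist y y' + edist y yb := by rw [edist_comm]
        _ < (t + t) + t := by
            apply ENNReal.add_lt_add hyy' (hy.trans_le hδ't)
      have h34 : t + t + t < 4 * t := by
        have : t + t + t + t = 4 * t := by ring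
        rw [← this]
        exact ENNReal.lt_add_right (by
          refine ENNReal.add_ne_top.mpr ⟨ENNReal.add_ne_top.mpr ⟨httop, httop⟩, httop⟩) ht0
      calc edist y' yb < 4 * t := h3t.trans h34
      _ = δ₀ := h4t
      _ ≤ δ := hδ₀δ
    have hkey : infEdist x (svInv F y) ≤ α * edist y y' :=
      hS y y' x hyδ hy'yb hy'mem hxδ
    calc β * infEdist x (svInv F y) ≤ β * (α * edist y y') := mul_le_mul_right hkey _
    _ = (β * α) * edist y y' := by ring
    _ ≤ 1 * edist y y' := mul_le_mul_left hβα.le _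
    _ = edist y y' := one_mul _
    _ ≤ infEdist y (F x) + ε' := hy'.le
    _ ≤ infEdist y (F x) + ε := add_le_add_right (min_le_left _ _) _

/-- The regularity modulus of `F` at `(xb, yb)` equals the reciprocal of the Lipschitz
modulus of `F⁻¹` at `(yb, xb)` (with conventions `1/∞ = 0`, `1/0 = ∞`). -/
theorem rgMod_eq_inv_lipModInv (F : X → Set Y) (xb : X) (yb : Y) (h : yb ∈ F xb) :
    rgMod F xb yb = (lipModInv F xb yb)⁻¹ := by
  apply le_antisymm
  · apply sSup_le
    rintro α ⟨δ, hδ, hT⟩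
    exact ENNReal.le_inv_iff_le_inv.mpr (lipModInv_le_inv_of_mem F xb yb α δ hδ hT)
  · refine le_of_forall_lt_imp_le_of_dense fun β hβ => ?_
    have h1 : lipModInv F xb yb < β⁻¹ := ENNReal.lt_inv_iff_lt_inv.mp hβ
    obtain ⟨α, hαS, hα⟩ := sInf_lt_iff.mp h1
    have hβα : β < α⁻¹ := ENNReal.lt_inv_iff_lt_inv.mp hα
    obtain ⟨δ, hδ, hS⟩ := hαS
    obtain ⟨δ', hδ', hT⟩ := mem_rg_of_lt_inv F xb yb h α β δ hδ hS hβα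
    exact le_sSup ⟨δ', hδ', hT⟩
end

section
/- Let F : X ⇉ Y be a set-valued mapping between normed spaces, f : X → Y Fréchet differentiable at x̄, (x̄,ȳ) ∈ gph F, and ε ≥ 0. Set ε₁ := ε/(‖∇f(x̄)‖+1) and ε₂ := (‖∇f(x̄)‖+1)ε. Then for every y* ∈ Y*: D*_{ε₁} F(x̄,ȳ)(y*) ⊆ D*_ε(F+f)(x̄, ȳ+f(x̄))(y*) − ∇f(x̄)* y* ⊆ D*_{ε₂} F(x̄,ȳ)(y*). -/
open Metric Set

set_option maxHeartbeats 1000000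

variable {X Y : Type*} [NormedAddCommGroup X] [NormedSpace ℝ X]
  [NormedAddCommGroup Y] [NormedSpace ℝ Y]

/-- The Fréchet `ε`-coderivative of `F` at `(xb, yb) ∈ gph F` (sum norm on `X × Y`):
`x* ∈ D*_ε F(xb,yb)(y*)` iff `(x*, −y*)` is a Fréchet `ε`-normal to the graph. -/
def epsCoderiv (ε : ℝ) (F : X → Set Y) (xb : X) (yb : Y) (ys : Y →L[ℝ] ℝ) :
    Set (X →L[ℝ] ℝ) :=
  {xs | ∀ η > 0, ∃ δ > 0, ∀ x y, y ∈ F x → ‖x - xb‖ + ‖y - yb‖ < δ →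
    xs (x - xb) - ys (y - yb) ≤ (ε + η) * (‖x - xb‖ + ‖y - yb‖)}

/-- The sum `F + f` of a set-valued mapping and a single-valued function. -/
def addFun (F : X → Set Y) (f : X → Y) : X → Set Y := fun x => {z | z - f x ∈ F x}

/-- Key lemma: if `v ∈ D*_e G(xb,cb)(y*)` and `g` is differentiable at `xb` with deriv `B`,
then `v + y*∘B ∈ D*_{e(‖B‖+1)}(G+g)(xb, cb+g(xb))(y*)`. -/
lemma epsCoderiv_addFun_aux (G : X → Set Y) (g : X → Y) (xb : X) (cb : Y)
    (B : X →L[ℝ] Y) (hg : HasFDerivAt g B xb) (e : ℝ) (he : 0 ≤ e)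
    (ys : Y →L[ℝ] ℝ) (v : X →L[ℝ] ℝ) (hv : v ∈ epsCoderiv e G xb cb ys) :
    v + ys.comp B ∈ epsCoderiv (e * (‖B‖ + 1)) (addFun G g) xb (cb + g xb) ys := by
  intro η hη
  have hNn : (0:ℝ) ≤ ‖ys‖ := norm_nonneg _
  have hBn : (0:ℝ) ≤ ‖B‖ := norm_nonneg _
  have hys : ∀ u : Y, ys u ≤ ‖ys‖ * ‖u‖ :=
    fun u => le_trans (le_abs_self _) (ys.le_opNorm u)
  set γ : ℝ := min 1 (η / (2 * (e + ‖ys‖ + 1))) with hγdef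
  have hγpos : 0 < γ := lt_min one_pos (by positivity)
  have hγ1 : γ ≤ 1 := min_le_left _ _
  have hγ2 : γ * (e + ‖ys‖ + 1) ≤ η / 2 := by
    have h := min_le_right 1 (η / (2 * (e + ‖ys‖ + 1)))
    have hpos : (0:ℝ) < 2 * (e + ‖ys‖ + 1) := by positivity
    have := (le_div_iff₀ hpos).mp h
    linarith
  set η' : ℝ := η / (2 * (‖B‖ + 2)) with hη'def
  have hη'pos : 0 < η' := by positivity
  have hη'2 : η' * (‖B‖ + 2) = η / 2 := by
    rw [hη'def]; field_simp
  obtain ⟨δ₀, hδ₀, hw⟩ := hv η' hη'pos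
  obtain ⟨r, hr, hball⟩ := Metric.eventually_nhds_iff.mp (hg.isLittleO.def hγpos)
  refine ⟨min (δ₀ / (‖B‖ + 2)) r, lt_min (by positivity) hr, ?_⟩
  intro x z hz hS
  have hy : z - g x ∈ G x := hz
  set a : ℝ := ‖x - xb‖ with hadef
  set b : ℝ := ‖z - (cb + g xb)‖ with hbdef
  have ha : 0 ≤ a := norm_nonneg _
  have hb : 0 ≤ b := norm_nonneg _
  have hSr : a + b < r := lt_of_lt_of_le hS (min_le_right _ _)
  have hax : dist x xb < r := by rw [dist_eq_norm]; linarith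
  have hE : ‖g x - g xb - B (x - xb)‖ ≤ γ * a := hball hax
  have hgx : ‖g x - g xb‖ ≤ (‖B‖ + γ) * a := by
    have h1 : g x - g xb = B (x - xb) + (g x - g xb - B (x - xb)) := by abel
    rw [h1]
    refine (norm_add_le _ _).trans ?_
    have h2 := B.le_opNorm (x - xb)
    nlinarith
  set c : ℝ := ‖(z - g x) - cb‖ with hcdef
  have hcn : 0 ≤ c := norm_nonneg _
  have hc : c ≤ b + (‖B‖ + γ) * a := by
    have h1 : (z - g x) - cb = (z - (cb + g xb)) - (g x - g xb) := by abel
    rw [hcdef, h1]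
    exact (norm_sub_le _ _).trans (by linarith)
  have hT : a + c < δ₀ := by
    have h2 : (a + b) * (‖B‖ + 2) < δ₀ :=
      (lt_div_iff₀ (by positivity)).mp (lt_of_lt_of_le hS (min_le_left _ _))
    nlinarith [mul_nonneg (sub_nonneg.mpr hγ1) ha,
      mul_nonneg (by positivity : (0:ℝ) ≤ ‖B‖ + 1) hb]
  have hmain := hw x (z - g x) hy hT
  have hsplit : ys (z - (cb + g xb)) = ys ((z - g x) - cb) + ys (g x - g xb) := by
    rw [← map_add]; congr 1; abel
  have happ : (v + ys.comp B) (x - xb) = v (x - xb) + ys (B (x - xb)) := rfl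
  have hrem : ys (B (x - xb)) - ys (g x - g xb) ≤ ‖ys‖ * (γ * a) := by
    rw [← map_sub]
    refine (hys _).trans ?_
    have h2 : ‖B (x - xb) - (g x - g xb)‖ = ‖g x - g xb - B (x - xb)‖ :=
      norm_sub_rev _ _
    rw [h2]
    exact mul_le_mul_of_nonneg_left hE hNn
  have k1 : a + c ≤ (1 + ‖B‖ + γ) * (a + b) := by
    nlinarith [mul_nonneg (add_nonneg hBn hγpos.le) hb]
  have k2 : (e + η') * (a + c) ≤ (e + η') * ((1 + ‖B‖ + γ) * (a + b)) :=
    mul_le_mul_of_nonneg_left k1 (by positivity)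
  have k3a : η' * (1 + ‖B‖ + γ) ≤ η' * (‖B‖ + 2) :=
    mul_le_mul_of_nonneg_left (by linarith) hη'pos.le
  have k3 : (e + η') * (1 + ‖B‖ + γ) ≤ e * (‖B‖ + 1) + e * γ + η / 2 := by
    have hexp : (e + η') * (1 + ‖B‖ + γ) =
        e * (‖B‖ + 1) + e * γ + η' * (1 + ‖B‖ + γ) := by ring
    rw [hexp]
    linarith [hη'2, k3a]
  have k4 : (e + η') * ((1 + ‖B‖ + γ) * (a + b)) ≤
      (e * (‖B‖ + 1) + e * γ + η / 2) * (a + b) := by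
    rw [← mul_assoc]
    exact mul_le_mul_of_nonneg_right k3 (by positivity)
  have k5 : e * γ * (a + b) + ‖ys‖ * (γ * a) ≤ (η / 2) * (a + b) := by
    nlinarith [mul_le_mul_of_nonneg_right hγ2 (by positivity : (0:ℝ) ≤ a + b),
      mul_nonneg (mul_nonneg hNn hγpos.le) hb,
      mul_nonneg hγpos.le (add_nonneg ha hb)]
  have goal' : (v + ys.comp B) (x - xb) - ys (z - (cb + g xb)) ≤
      (e * (‖B‖ + 1) + η) * (a + b) := by
    rw [happ, hsplit]
    nlinarith [hmain, hrem, k2, k4, k5]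
  exact goal'

/-- Theorem 2.3: `ε`-coderivatives of `F + f` for `f` Fréchet differentiable at `xb`,
where `ε₁ = ε/(‖∇f(xb)‖+1)` and `ε₂ = (‖∇f(xb)‖+1)ε`:
`D*_{ε₁}F(xb,yb)(y*) ⊆ D*_ε(F+f)(xb,yb+f(xb))(y*) − ∇f(xb)*y* ⊆ D*_{ε₂}F(xb,yb)(y*)`. -/
theorem epsCoderiv_addFun (F : X → Set Y) (f : X → Y) (xb : X) (yb : Y)
    (hyb : yb ∈ F xb) (A : X →L[ℝ] Y) (hf : HasFDerivAt f A xb)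
    (ε : ℝ) (hε : 0 ≤ ε) (ys : Y →L[ℝ] ℝ) :
    epsCoderiv (ε / (‖A‖ + 1)) F xb yb ys ⊆
      {w | w + ys.comp A ∈ epsCoderiv ε (addFun F f) xb (yb + f xb) ys} ∧
    {w | w + ys.comp A ∈ epsCoderiv ε (addFun F f) xb (yb + f xb) ys} ⊆
      epsCoderiv ((‖A‖ + 1) * ε) F xb yb ys := by
  have hA : (0:ℝ) < ‖A‖ + 1 := by positivity
  constructor
  · intro w hw
    have := epsCoderiv_addFun_aux F f xb yb A hf (ε / (‖A‖ + 1))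
      (by positivity) ys w hw
    rwa [div_mul_cancel₀ ε hA.ne'] at this
  · intro w hw
    have := epsCoderiv_addFun_aux (addFun F f) (fun x => -f x) xb (yb + f xb)
      (-A) hf.neg ε hε ys (w + ys.comp A) hw
    have e1 : w + ys.comp A + ys.comp (-A) = w := by
      ext u; simp
    have e2 : addFun (addFun F f) (fun x => -f x) = F := by
      funext x; ext z; simp [addFun]
    have e3 : yb + f xb + -f xb = yb := by abel
    rw [e1, e2, e3, norm_neg, mul_comm] at this
    exact this
end

section
/- Let F : X ⇉ Y between normed spaces, f : X → Y, (x̄,ȳ) ∈ gph F, ε ≥ 0, and suppose f is calm at x̄ with c := clm f(x̄) < 1. Then for all y* ∈ Y* and x* ∈ D*_ε F(x̄,ȳ)(y*), one has x* ∈ D*_δ (F+f)(x̄, ȳ+f(x̄))(y*) with δ := (ε + c‖y*‖)/(1−c). -/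
open Metric Set Filter Topology ENNReal

variable {X Y : Type*} [NormedAddCommGroup X] [NormedSpace ℝ X]
  [NormedAddCommGroup Y] [NormedSpace ℝ Y]

/-- The calmness modulus of `f` at `xb`. -/
noncomputable def clmMod (f : X → Y) (xb : X) : ℝ≥0∞ :=
  Filter.limsup (fun x => edist (f x) (f xb) / edist x xb) (𝓝[≠] xb)

set_option maxHeartbeats 800000 in
/-- Lemma 2.6: if `f` is calm at `xb` with modulus `c < 1`, then any
`x* ∈ D*_ε F(xb,yb)(y*)` belongs to `D*_δ (F+f)(xb, yb+f(xb))(y*)`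
with `δ = (ε + c‖y*‖)/(1−c)`. -/
theorem epsCoderiv_addFun_calm (F : X → Set Y) (f : X → Y) (xb : X) (yb : Y)
    (hyb : yb ∈ F xb) (ε : ℝ) (hε : 0 ≤ ε)
    (c : ℝ) (hc0 : 0 ≤ c) (hc1 : c < 1) (hclm : clmMod f xb = ENNReal.ofReal c)
    (ys : Y →L[ℝ] ℝ) (xs : X →L[ℝ] ℝ) (hxs : xs ∈ epsCoderiv ε F xb yb ys) :
    xs ∈ epsCoderiv ((ε + c * ‖ys‖) / (1 - c)) (addFun F f) xb (yb + f xb) ys := by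

  intro η hη
  set K := ‖ys‖ with hK
  have hKnn : (0:ℝ) ≤ K := norm_nonneg _
  set t : ℝ := min 1 (η / (ε + 3 + K)) with htdef
  have hden : (0:ℝ) < ε + 3 + K := by linarith
  have ht0 : 0 < t := lt_min one_pos (div_pos hη hden)
  have ht1 : t ≤ 1 := min_le_left _ _
  have htη : t * (ε + 3 + K) ≤ η := by
    have := min_le_right 1 (η / (ε + 3 + K))
    calc t * (ε + 3 + K) ≤ (η / (ε + 3 + K)) * (ε + 3 + K) := by
          exact mul_le_mul_of_nonneg_right this (le_of_lt hden)
      _ = η := div_mul_cancel₀ _ (ne_of_gt hden)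
  -- coderivative hypothesis at accuracy t
  obtain ⟨δ₁, hδ₁0, hδ₁⟩ := hxs t ht0
  -- calmness bound
  have hlim : Filter.limsup (fun x => edist (f x) (f xb) / edist x xb) (𝓝[≠] xb)
      < ENNReal.ofReal (c + t) := by
    rw [show Filter.limsup (fun x => edist (f x) (f xb) / edist x xb) (𝓝[≠] xb) = clmMod f xb
        from rfl, hclm]
    exact (ENNReal.ofReal_lt_ofReal_iff (by linarith)).2 (by linarith)
  have hev := Filter.eventually_lt_of_limsup_lt hlim
  rw [eventually_nhdsWithin_iff, Metric.eventually_nhds_iff] at hev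
  obtain ⟨r, hr0, hr⟩ := hev
  have hcalm : ∀ x : X, dist x xb < r → ‖f x - f xb‖ ≤ (c + t) * ‖x - xb‖ := by
    intro x hx
    by_cases hxe : x = xb
    · simp [hxe]
    · have h1 := hr hx (by simpa using hxe)
      have h0 : edist x xb ≠ 0 := by simpa [edist_eq_zero] using hxe
      have htop : edist x xb ≠ ⊤ := edist_ne_top _ _
      have h2 : edist (f x) (f xb) < ENNReal.ofReal (c + t) * edist x xb :=
        (ENNReal.div_lt_iff (Or.inl h0) (Or.inl htop)).1 h1
      rw [edist_dist, edist_dist, ← ENNReal.ofReal_mul (by linarith)] at h2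
      have h3 : dist (f x) (f xb) < (c + t) * dist x xb :=
        (ENNReal.ofReal_lt_ofReal_iff_of_nonneg dist_nonneg).1 h2
      rw [dist_eq_norm, dist_eq_norm] at h3
      exact le_of_lt h3
  refine ⟨min r (δ₁ / 3), lt_min hr0 (by linarith), ?_⟩
  intro x z hz hnorm
  set p := x - xb with hp
  set q := z - (yb + f xb) with hq
  set w := f x - f xb with hw
  have hpq : ‖p‖ + ‖q‖ < min r (δ₁ / 3) := hnorm
  have hqnn : (0:ℝ) ≤ ‖q‖ := norm_nonneg _
  have hpnn : (0:ℝ) ≤ ‖p‖ := norm_nonneg _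
  have hxr : dist x xb < r := by
    rw [dist_eq_norm]
    have := lt_of_lt_of_le hpq (min_le_left _ _)
    linarith
  have hwb : ‖w‖ ≤ (c + t) * ‖p‖ := hcalm x hxr
  set y := z - f x with hy
  have hyF : y ∈ F x := hz
  have hqy : y - yb = q - w := by
    simp only [hy, hq, hw]; abel
  have hyB : ‖y - yb‖ ≤ ‖q‖ + ‖w‖ := by
    rw [hqy]; exact norm_sub_le _ _
  have hynn : (0:ℝ) ≤ ‖y - yb‖ := norm_nonneg _
  have hsmall : ‖p‖ + ‖y - yb‖ < δ₁ := by
    have h3 : ‖p‖ + ‖q‖ < δ₁ / 3 := lt_of_lt_of_le hpq (min_le_right _ _)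
    nlinarith
  have h1 : xs p - ys (y - yb) ≤ (ε + t) * (‖p‖ + ‖y - yb‖) := hδ₁ x y hyF hsmall
  have h4 : ys q = ys (y - yb) + ys w := by
    rw [← map_add]; congr 1; rw [hqy]; abel
  have h5 : -(K * ‖w‖) ≤ ys w := by
    have h := ys.le_opNorm w
    have habs : |ys w| ≤ K * ‖w‖ := by simpa [Real.norm_eq_abs] using h
    linarith [neg_abs_le (ys w)]
  have hδ0 : (ε + c * K) / (1 - c) * (1 - c) = ε + c * K :=
    div_mul_cancel₀ _ (by linarith)
  set D := (ε + c * K) / (1 - c) with hD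
  have hDnn : 0 ≤ D := div_nonneg (by nlinarith) (by linarith)
  -- key coefficient bound
  have htle : t ≤ η := by
    have h' : 0 ≤ t * (ε + 2 + K) := mul_nonneg ht0.le (by linarith)
    nlinarith [htη]
  have hDε : ε ≤ D := by
    have h1' : 0 ≤ D * c := mul_nonneg hDnn hc0
    have h2' : 0 ≤ c * K := mul_nonneg hc0 hKnn
    nlinarith [hδ0]
  have hεD : ε + t ≤ D + η := by linarith
  have hcoef : (ε + t) * (1 + c + t) + K * (c + t) ≤ D + η := by
    have hB : 0 ≤ c * (D - ε) := mul_nonneg hc0 (by linarith)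
    have hC : 0 ≤ t * (2 - c - t) := mul_nonneg ht0.le (by linarith)
    nlinarith [hδ0, htη]
  have hyB2 : ‖y - yb‖ ≤ ‖q‖ + (c + t) * ‖p‖ := le_trans hyB (by linarith)
  have h6 : (ε + t) * ‖y - yb‖ ≤ (ε + t) * (‖q‖ + (c + t) * ‖p‖) :=
    mul_le_mul_of_nonneg_left hyB2 (by linarith : (0:ℝ) ≤ ε + t)
  have hKw : K * ‖w‖ ≤ K * ((c + t) * ‖p‖) := mul_le_mul_of_nonneg_left hwb hKnn
  have hmain : xs p - ys q ≤ (ε + t) * ‖q‖ + ((ε + t) * (1 + c + t) + K * (c + t)) * ‖p‖ := by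
    have hq' : xs p - ys q = (xs p - ys (y - yb)) - ys w := by rw [h4]; ring
    nlinarith [h1, h5, hKw, h6]
  have hcp : ((ε + t) * (1 + c + t) + K * (c + t)) * ‖p‖ ≤ (D + η) * ‖p‖ :=
    mul_le_mul_of_nonneg_right hcoef hpnn
  have hcq : (ε + t) * ‖q‖ ≤ (D + η) * ‖q‖ := mul_le_mul_of_nonneg_right hεD hqnn
  calc xs p - ys q ≤ (ε + t) * ‖q‖ + ((ε + t) * (1 + c + t) + K * (c + t)) * ‖p‖ := hmain
    _ ≤ (D + η) * (‖p‖ + ‖q‖) := by linarith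
end

section
/- Let f : X → Y be a function between normed spaces and x̄ ∈ X. Suppose the directional derivatives f'(x; x−x̄) and f'(x; x̄−x) exist for all x ≠ x̄ near x̄, and lim_{x̄≠x→x̄} max{‖f(x)−f(x̄)−f'(x;x−x̄)‖, ‖f(x)−f(x̄)+f'(x;x̄−x)‖} / ‖(f(x)−f(x̄), x−x̄)‖ = 0. Then f is semismooth* at x̄ (i.e., its graph is semismooth* at (x̄, f(x̄))). -/
open Metric Set Filter Topology

variable {X Y : Type*} [NormedAddCommGroup X] [NormedSpace ℝ X]
  [NormedAddCommGroup Y] [NormedSpace ℝ Y]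

/-- The set of Fréchet `δ`-normals to the graph of `f : X → Y` at `(x, f x)`,
with the sum norm on `X × Y` and pairs of functionals (max norm) as the dual. -/
def graphEpsNormal (δ : ℝ) (f : X → Y) (x : X) :
    Set ((X →L[ℝ] ℝ) × (Y →L[ℝ] ℝ)) :=
  {p | ∀ η > 0, ∃ ρ > 0, ∀ u, ‖u - x‖ + ‖f u - f x‖ < ρ →
    p.1 (u - x) + p.2 (f u - f x) ≤ (δ + η) * (‖u - x‖ + ‖f u - f x‖)}

/-- `f` is semismooth* at `xb`: its graph is semismooth* at `(xb, f xb)`. -/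
def SemismoothStarFun (f : X → Y) (xb : X) : Prop :=
  ∀ ε > (0:ℝ), ∃ δ > (0:ℝ), ∀ x, ‖x - xb‖ + ‖f x - f xb‖ < δ →
    ∀ p ∈ graphEpsNormal δ f x, max ‖p.1‖ ‖p.2‖ = 1 →
      |p.1 (x - xb) + p.2 (f x - f xb)| ≤ ε * (‖x - xb‖ + ‖f x - f xb‖)

lemma key_dir_ineq {p : (X →L[ℝ] ℝ) × (Y →L[ℝ] ℝ)} {f : X → Y} {x : X} (v : X) {d : Y} {δ : ℝ}
    (hp : p ∈ graphEpsNormal δ f x)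
    (hg : Tendsto (fun t : ℝ => t⁻¹ • (f (x + t • v) - f x)) (𝓝[>] 0) (𝓝 d)) :
    p.1 v + p.2 d ≤ δ * (‖v‖ + ‖d‖) := by
  set g : ℝ → Y := fun t => t⁻¹ • (f (x + t • v) - f x) with hgdef
  have step1 : ∀ η > (0:ℝ), p.1 v + p.2 d ≤ (δ + η) * (‖v‖ + ‖d‖) := by
    intro η hη
    obtain ⟨ρ, hρ, hρ'⟩ := hp η hη
    have hbd : ∀ᶠ t in 𝓝[>] (0:ℝ), ‖g t‖ < ‖d‖ + 1 :=
      hg.norm.eventually (eventually_lt_nhds (by linarith : ‖d‖ < ‖d‖ + 1))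
    have hsmall : Ioo (0:ℝ) (ρ / (‖v‖ + ‖d‖ + 1)) ∈ 𝓝[>] (0:ℝ) :=
      Ioo_mem_nhdsGT_of_mem ⟨le_refl _, by positivity⟩
    have hev : ∀ᶠ t in 𝓝[>] (0:ℝ),
        p.1 v + p.2 (g t) ≤ (δ + η) * (‖v‖ + ‖g t‖) := by
      filter_upwards [hbd, hsmall] with t hbt ht
      obtain ⟨ht0, htρ⟩ := ht
      have htne : t ≠ 0 := ne_of_gt ht0
      have hfu : f (x + t • v) - f x = t • g t := by
        simp [hgdef, smul_smul, mul_inv_cancel₀ htne]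
      have hu1 : (x + t • v) - x = t • v := by abel
      have hnorm : ‖(x + t • v) - x‖ + ‖f (x + t • v) - f x‖ = t * (‖v‖ + ‖g t‖) := by
        rw [hu1, hfu, norm_smul, norm_smul, Real.norm_eq_abs, abs_of_pos ht0]; ring
      have hlt : ‖(x + t • v) - x‖ + ‖f (x + t • v) - f x‖ < ρ := by
        rw [hnorm]
        have h1 : ‖v‖ + ‖g t‖ ≤ ‖v‖ + ‖d‖ + 1 := by linarith [norm_nonneg v]
        calc t * (‖v‖ + ‖g t‖) ≤ t * (‖v‖ + ‖d‖ + 1) := by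
              apply mul_le_mul_of_nonneg_left h1 ht0.le
          _ < (ρ / (‖v‖ + ‖d‖ + 1)) * (‖v‖ + ‖d‖ + 1) := by
              apply mul_lt_mul_of_pos_right htρ (by positivity)
          _ = ρ := by field_simp
      have := hρ' (x + t • v) hlt
      rw [hu1, hfu, map_smul, map_smul, smul_eq_mul, smul_eq_mul, norm_smul, norm_smul,
        Real.norm_eq_abs, abs_of_pos ht0] at this
      have h2 : t * (p.1 v + p.2 (g t)) ≤ t * ((δ + η) * (‖v‖ + ‖g t‖)) := by
        nlinarith [this]
      exact le_of_mul_le_mul_left h2 ht0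
    have hL : Tendsto (fun t => p.1 v + p.2 (g t)) (𝓝[>] (0:ℝ))
        (𝓝 (p.1 v + p.2 d)) :=
      tendsto_const_nhds.add ((p.2.continuous.tendsto d).comp hg)
    have hR : Tendsto (fun t => (δ + η) * (‖v‖ + ‖g t‖)) (𝓝[>] (0:ℝ))
        (𝓝 ((δ + η) * (‖v‖ + ‖d‖))) :=
      tendsto_const_nhds.mul (tendsto_const_nhds.add hg.norm)
    exact le_of_tendsto_of_tendsto hL hR hev
  by_contra hcon
  push_neg at hcon
  set a := p.1 v + p.2 d
  set c := ‖v‖ + ‖d‖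
  have hc : 0 ≤ c := by positivity
  have hη : (0:ℝ) < (a - δ * c) / (c + 1) := by
    apply div_pos <;> nlinarith
  have := step1 _ hη
  have h3 : (a - δ * c) / (c + 1) * (c + 1) = a - δ * c := by field_simp
  nlinarith [mul_le_mul_of_nonneg_left (le_of_lt (lt_add_one c)) (le_of_lt hη)]

/-- Proposition 3.5: if the directional derivatives `f'(x; x−xb)` and `f'(x; xb−x)` exist
for all `x ≠ xb` near `xb` and the stated limit condition holds, then `f` is
semismooth* at `xb`. -/
theorem semismoothStarFun_of_dirDeriv (f : X → Y) (xb : X) (d₁ d₂ : X → Y)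
    (δ₀ : ℝ) (hδ₀ : 0 < δ₀)
    (hd : ∀ x, x ≠ xb → ‖x - xb‖ < δ₀ →
      Tendsto (fun t : ℝ => t⁻¹ • (f (x + t • (x - xb)) - f x)) (𝓝[>] 0) (𝓝 (d₁ x)) ∧
      Tendsto (fun t : ℝ => t⁻¹ • (f (x + t • (xb - x)) - f x)) (𝓝[>] 0) (𝓝 (d₂ x)))
    (hlim : Tendsto
      (fun x => max ‖f x - f xb - d₁ x‖ ‖f x - f xb + d₂ x‖ / (‖f x - f xb‖ + ‖x - xb‖))
      (𝓝[≠] xb) (𝓝 0)) :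
    SemismoothStarFun f xb := by
  intro ε hε
  rw [Metric.tendsto_nhdsWithin_nhds] at hlim
  obtain ⟨δ₁, hδ₁, hδ₁'⟩ := hlim (ε/2) (by linarith)
  refine ⟨min (min δ₀ δ₁) (ε/(2+ε)), by positivity, ?_⟩
  set δ := min (min δ₀ δ₁) (ε/(2+ε)) with hδdef
  have hδpos : 0 < δ := by positivity
  have htop : δ * (2+ε) ≤ ε := by
    have h1 : δ ≤ ε/(2+ε) := min_le_right _ _
    rw [div_eq_inv_mul] at h1
    calc δ * (2+ε) ≤ ((2+ε)⁻¹ * ε) * (2+ε) := by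
          apply mul_le_mul_of_nonneg_right h1 (by linarith)
      _ = ε := by field_simp
  intro x hx p hp hmax
  by_cases hxeq : x = xb
  · simp [hxeq]
  · have hxr : ‖x - xb‖ ≤ ‖x - xb‖ + ‖f x - f xb‖ := by
      linarith [norm_nonneg (f x - f xb)]
    have hxd₀ : ‖x - xb‖ < δ₀ := by
      have h := (min_le_left δ₀ δ₁).trans' (min_le_left (min δ₀ δ₁) (ε/(2+ε)))
      linarith
    have hxd₁ : ‖x - xb‖ < δ₁ := by
      have h := (min_le_right δ₀ δ₁).trans' (min_le_left (min δ₀ δ₁) (ε/(2+ε)))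
      linarith
    obtain ⟨hT1, hT2⟩ := hd x hxeq hxd₀
    have hA := key_dir_ineq (x - xb) hp hT1
    have hB := key_dir_ineq (xb - x) hp hT2
    set r := ‖x - xb‖ + ‖f x - f xb‖ with hr
    have hrpos : 0 < r := by
      have : 0 < ‖x - xb‖ := by
        rw [norm_pos_iff, sub_ne_zero]; exact hxeq
      have := norm_nonneg (f x - f xb)
      linarith
    set m := max ‖f x - f xb - d₁ x‖ ‖f x - f xb + d₂ x‖ with hm
    have hmr : m < (ε/2) * r := by
      have hq := hδ₁' (by simpa using hxeq) (by rwa [dist_eq_norm])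
      rw [Real.dist_eq, sub_zero] at hq
      have hrr : ‖f x - f xb‖ + ‖x - xb‖ = r := by rw [hr]; ring
      rw [hrr] at hq
      have hq0 : 0 ≤ m / r := div_nonneg (le_trans (norm_nonneg _) (le_max_left _ _)) hrpos.le
      rw [abs_of_nonneg hq0] at hq
      exact (div_lt_iff₀ hrpos).mp hq
    have hm1 : ‖f x - f xb - d₁ x‖ ≤ m := le_max_left _ _
    have hm2 : ‖f x - f xb + d₂ x‖ ≤ m := le_max_right _ _
    have hd1n : ‖d₁ x‖ ≤ ‖f x - f xb‖ + m := by
      have h := norm_sub_le (f x - f xb) (f x - f xb - d₁ x)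
      have he : (f x - f xb) - (f x - f xb - d₁ x) = d₁ x := by abel
      rw [he] at h; linarith
    have hd2n : ‖d₂ x‖ ≤ ‖f x - f xb‖ + m := by
      have h := norm_sub_le (f x - f xb + d₂ x) (f x - f xb)
      have he : (f x - f xb + d₂ x) - (f x - f xb) = d₂ x := by abel
      rw [he] at h; linarith
    have hp2 : ‖p.2‖ ≤ 1 := hmax ▸ le_max_right _ _
    have hB1 : p.2 (f x - f xb) - p.2 (d₁ x) ≤ m := by
      have h1 : p.2 (f x - f xb) - p.2 (d₁ x) = p.2 (f x - f xb - d₁ x) := by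
        simp [map_sub]
      rw [h1]
      calc p.2 (f x - f xb - d₁ x) ≤ ‖p.2 (f x - f xb - d₁ x)‖ := le_abs_self _
        _ ≤ ‖p.2‖ * ‖f x - f xb - d₁ x‖ := p.2.le_opNorm _
        _ ≤ 1 * m := mul_le_mul hp2 hm1 (norm_nonneg _) zero_le_one
        _ = m := one_mul m
    have hB2 : -p.2 (f x - f xb) - p.2 (d₂ x) ≤ m := by
      have h1 : -p.2 (f x - f xb) - p.2 (d₂ x) = -(p.2 (f x - f xb + d₂ x)) := by
        rw [map_add]; ring
      rw [h1]
      calc -(p.2 (f x - f xb + d₂ x)) ≤ ‖p.2 (f x - f xb + d₂ x)‖ := neg_le_abs _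
        _ ≤ ‖p.2‖ * ‖f x - f xb + d₂ x‖ := p.2.le_opNorm _
        _ ≤ 1 * m := mul_le_mul hp2 hm2 (norm_nonneg _) zero_le_one
        _ = m := one_mul m
    have hBneg : p.1 (xb - x) = -(p.1 (x - xb)) := by
      rw [show xb - x = -(x - xb) by abel, map_neg]
    rw [hBneg] at hB
    have hnn : ‖xb - x‖ = ‖x - xb‖ := norm_sub_rev _ _
    rw [hnn] at hB
    rw [abs_le]
    have hmnn : 0 ≤ m := le_trans (norm_nonneg _) hm1
    constructor
    · nlinarith [mul_le_mul_of_nonneg_right htop hrpos.le,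
        mul_le_mul_of_nonneg_left (le_of_lt hmr) hδpos.le]
    · nlinarith [mul_le_mul_of_nonneg_right htop hrpos.le,
        mul_le_mul_of_nonneg_left (le_of_lt hmr) hδpos.le]
end

section
/- If a function f : X → Y between normed spaces is positively homogeneous at x̄ ∈ X, i.e., f(x̄ + λ(x − x̄)) = f(x̄) + λ(f(x) − f(x̄)) for all x ∈ X and λ > 0, then f is semismooth* at x̄. -/
open Metric Set Filter Topology

variable {X Y : Type*} [NormedAddCommGroup X] [NormedSpace ℝ X]
  [NormedAddCommGroup Y] [NormedSpace ℝ Y]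

/-- Corollary 3.6: a function positively homogeneous at `xb` is semismooth* at `xb`. -/
theorem semismoothStarFun_of_posHomogeneous (f : X → Y) (xb : X)
    (hph : ∀ (x : X) (lam : ℝ), 0 < lam →
      f (xb + lam • (x - xb)) = f xb + lam • (f x - f xb)) :
    SemismoothStarFun f xb := by
  intro ε hε
  refine ⟨ε, hε, ?_⟩
  intro x _hx p hp _hnorm
  set v := x - xb with hv
  set w := f x - f xb with hw
  set M := ‖v‖ + ‖w‖ with hMdef
  have hM0 : 0 ≤ M := by positivity
  rcases eq_or_lt_of_le hM0 with hM0' | hMpos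
  · have hv0 : v = 0 := by
      have : ‖v‖ = 0 := by
        have h1 : ‖v‖ ≤ M := le_add_of_nonneg_right (norm_nonneg _)
        nlinarith [norm_nonneg v]
      simpa using this
    have hw0 : w = 0 := by
      have : ‖w‖ = 0 := by
        have h1 : ‖w‖ ≤ M := le_add_of_nonneg_left (norm_nonneg _)
        nlinarith [norm_nonneg w]
      simpa using this
    simp [hv0, hw0, ← hMdef, ← hM0']
  · -- main case: M > 0
    have hfx : f x = f xb + w := by rw [hw]; abel
    have key : ∀ η > 0, |p.1 v + p.2 w| ≤ (ε + η) * M := by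
      intro η hη
      obtain ⟨ρ, hρ, hρ'⟩ := hp η hη
      set t := min (1/2 : ℝ) (ρ / (2 * M)) with ht
      have ht0 : 0 < t := lt_min (by norm_num) (by positivity)
      have ht1 : t < 1 := lt_of_le_of_lt (min_le_left _ _) (by norm_num)
      have htM : t * M < ρ := by
        have h1 : t ≤ ρ / (2 * M) := min_le_right _ _
        have h2 : t * M ≤ (ρ / (2 * M)) * M := by nlinarith
        have h3 : (ρ / (2 * M)) * M = ρ / 2 := by field_simp
        calc t * M ≤ ρ / 2 := by rw [← h3]; exact h2
          _ < ρ := by linarith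
      have hcomp : ∀ lam : ℝ, 0 < lam →
          (xb + lam • v) - x = (lam - 1) • v ∧
          f (xb + lam • v) - f x = (lam - 1) • w := by
        intro lam hlam
        constructor
        · rw [hv]; module
        · rw [hph x lam hlam, hw]; module
      have habs : ∀ s : ℝ, ‖s • v‖ + ‖s • w‖ = |s| * M := by
        intro s
        simp only [norm_smul, Real.norm_eq_abs]; ring
      -- λ = 1 + t
      obtain ⟨he1, he2⟩ := hcomp (1 + t) (by linarith)
      have h1 := hρ' (xb + (1+t) • v) ?_
      rotate_left
      · rw [he1, he2, habs]
        rw [show (1 + t - 1) = t by ring, abs_of_pos ht0]; exact htM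
      rw [he1, he2, habs, show (1 + t - 1) = t by ring, abs_of_pos ht0,
        map_smul, map_smul] at h1
      simp only [smul_eq_mul] at h1
      have hplus : p.1 v + p.2 w ≤ (ε + η) * M := by nlinarith
      -- λ = 1 - t
      obtain ⟨hf1, hf2⟩ := hcomp (1 - t) (by linarith)
      have h3 := hρ' (xb + (1-t) • v) ?_
      rotate_left
      · rw [hf1, hf2, habs]
        rw [show |(1 - t - 1)| = t by rw [abs_of_nonpos (by linarith)]; ring]
        exact htM
      rw [hf1, hf2, habs, show |(1 - t - 1)| = t by
        rw [abs_of_nonpos (by linarith)]; ring, map_smul, map_smul,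
        show (1 - t - 1) = -t by ring] at h3
      simp only [smul_eq_mul] at h3
      have hminus : -(p.1 v + p.2 w) ≤ (ε + η) * M := by nlinarith
      exact abs_le.mpr ⟨by linarith, hplus⟩
    -- conclude
    refine le_of_forall_pos_le_add ?_
    intro c hc
    have hk := key (c / M) (by positivity)
    have heq : (ε + c / M) * M = ε * M + c := by field_simp
    rw [heq] at hk
    exact hk
end

section
/- Let X, Y be Banach spaces and F : X ⇉ Y be strongly subregular at (x̄,ȳ) ∈ gph F. Then the radius of strong subregularity with respect to calm perturbations equals the subregularity modulus: rad[sSR]_{clm}F(x̄,ȳ) = srg F(x̄,ȳ); moreover the same value is attained over the smaller classes of firmly calm and firmly calm semismooth* perturbations. -/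
open Metric Set ENNReal NNReal EMetric Filter Topology

variable {X Y : Type*} [NormedAddCommGroup X] [NormedSpace ℝ X]
  [NormedAddCommGroup Y] [NormedSpace ℝ Y]

/-- `F` is (metrically) subregular at `(xb, yb)`. -/
def Subregular (F : X → Set Y) (xb : X) (yb : Y) : Prop :=
  ∃ α : ℝ≥0, 0 < α ∧ ∃ δ > (0:ℝ), ∀ x, ‖x - xb‖ < δ →
    (α : ℝ≥0∞) * infEdist x (svInv F yb) ≤ infEdist yb (F x)

/-- `F` is strongly subregular at `(xb, yb)`: subregular and `xb` is an isolated point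
of `F⁻¹(yb)`. -/
def StronglySubregular (F : X → Set Y) (xb : X) (yb : Y) : Prop :=
  Subregular F xb yb ∧ ∃ δ > (0:ℝ), ∀ x ∈ svInv F yb, ‖x - xb‖ < δ → x = xb

/-- The subregularity modulus: supremum of admissible `α`. -/
noncomputable def srgMod (F : X → Set Y) (xb : X) (yb : Y) : ℝ≥0∞ :=
  sSup {α : ℝ≥0∞ | ∃ δ > (0:ℝ), ∀ x, ‖x - xb‖ < δ →
    α * infEdist x (svInv F yb) ≤ infEdist yb (F x)}

/-- `f` is calm at `xb`. -/
def Calm (f : X → Y) (xb : X) : Prop := clmMod f xb < ⊤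

/-- `f` is firmly calm at `xb`: calm at `xb` and Lipschitz continuous around every
`x ≠ xb` near `xb`. -/
def FirmlyCalm (f : X → Y) (xb : X) : Prop :=
  Calm f xb ∧ ∃ δ > (0:ℝ), ∀ x, x ≠ xb → ‖x - xb‖ < δ →
    ∃ (K : ℝ≥0) (ρ : ℝ), 0 < ρ ∧ LipschitzOnWith K f (ball x ρ)

/-- The radius of strong subregularity of `F` at `(xb, yb)` with respect to
perturbations from a class `P`, vanishing at `xb`, measured by the calmness modulus. -/
noncomputable def radsSR (P : (X → Y) → Prop) (F : X → Set Y) (xb : X) (yb : Y) : ℝ≥0∞ :=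
  sInf {r : ℝ≥0∞ | ∃ f : X → Y, P f ∧ f xb = 0 ∧
    ¬ StronglySubregular (addFun F f) xb yb ∧ r = clmMod f xb}

lemma iso_infEdist (F : X → Set Y) (xb : X) (yb : Y) (h : yb ∈ F xb)
    {δ0 : ℝ} (hiso : ∀ x ∈ svInv F yb, ‖x - xb‖ < δ0 → x = xb)
    {x : X} (hx : ‖x - xb‖ < δ0 / 2) :
    infEdist x (svInv F yb) = edist x xb := by
  refine le_antisymm (infEdist_le_edist_of_mem h) (le_infEdist.mpr ?_)
  intro z hz
  by_cases hzδ : ‖z - xb‖ < δ0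
  · rw [hiso z hz hzδ]
  · rw [edist_dist, edist_dist]
    apply ENNReal.ofReal_le_ofReal
    rw [dist_eq_norm, dist_eq_norm]
    have h1 : δ0 ≤ ‖z - xb‖ := not_lt.mp hzδ
    have h2 : ‖z - xb‖ - ‖x - xb‖ ≤ ‖x - z‖ := by
      have h3 := norm_sub_norm_le (z - xb) (x - xb)
      have h4 : (z - xb) - (x - xb) = z - x := by abel
      rw [h4, norm_sub_rev z x] at h3
      linarith
    linarith

lemma calm_bound (f : X → Y) (xb : X) (hf0 : f xb = 0) {γ : ℝ≥0∞}
    (hγ : clmMod f xb < γ) :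
    ∃ δf > (0:ℝ), ∀ x, x ≠ xb → ‖x - xb‖ < δf →
      (‖f x‖₊ : ℝ≥0∞) ≤ γ * edist x xb := by
  rw [clmMod, Filter.limsup_eq] at hγ
  obtain ⟨a, ha, haγ⟩ := sInf_lt_iff.mp hγ
  obtain ⟨δf, hδf, hsub⟩ := Metric.mem_nhdsWithin_iff.mp ha
  refine ⟨δf, hδf, fun x hxne hxδ => ?_⟩
  have hx : edist (f x) (f xb) / edist x xb ≤ a := hsub ⟨Metric.mem_ball.mpr (by rwa [dist_eq_norm]),
    Set.mem_compl_singleton_iff.mpr hxne⟩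
  rw [hf0] at hx
  have hed : edist (f x) 0 = (‖f x‖₊ : ℝ≥0∞) := by
    rw [edist_eq_enorm_sub, sub_zero]; rfl
  rw [hed] at hx
  have hne0 : edist x xb ≠ 0 := by
    simp only [ne_eq, edist_eq_enorm_sub]
    simpa using sub_ne_zero_of_ne hxne
  have hnetop : edist x xb ≠ ⊤ := edist_ne_top x xb
  calc (‖f x‖₊ : ℝ≥0∞) ≤ a * edist x xb :=
        (ENNReal.div_le_iff_le_mul (Or.inl hne0) (Or.inl hnetop)).mp hx
    _ ≤ γ * edist x xb := mul_le_mul_left haγ.le _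

lemma stronglySubregular_addFun
    (F : X → Set Y) (xb : X) (yb : Y) (h : yb ∈ F xb)
    {δ0 : ℝ} (hδ0 : 0 < δ0) (hiso : ∀ x ∈ svInv F yb, ‖x - xb‖ < δ0 → x = xb)
    (f : X → Y) (hcalm : Calm f xb) (hf0 : f xb = 0)
    (hlt : clmMod f xb < srgMod F xb yb) :
    StronglySubregular (addFun F f) xb yb := by
  rw [srgMod] at hlt
  obtain ⟨α, hαS, hclmα⟩ := lt_sSup_iff.mp hlt
  obtain ⟨δ1, hδ1, hα⟩ := hαS
  set clm := clmMod f xb with hclm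
  have hclmtop : clm ≠ ⊤ := hcalm.ne
  have hD : clm < min α (clm + 1) :=
    lt_min hclmα (ENNReal.lt_add_right hclmtop one_ne_zero)
  obtain ⟨γ2, hγ2a, hγ2b⟩ := exists_between hD
  obtain ⟨γ1, hγ1a, hγ1b⟩ := exists_between hγ2a
  have hγ2α : γ2 ≤ α := hγ2b.le.trans (min_le_left _ _)
  have hlt2 : γ2 < clm + 1 := hγ2b.trans_le (min_le_right _ _)
  have hγ2top : γ2 ≠ ⊤ :=
    (hlt2.trans (ENNReal.add_lt_top.mpr ⟨hclmtop.lt_top, ENNReal.one_lt_top⟩)).ne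
  have hγ1top : γ1 ≠ ⊤ := (hγ1b.trans hγ2top.lt_top).ne
  obtain ⟨δf, hδf, hfb⟩ := calm_bound f xb hf0 hγ1a
  set δ : ℝ := min δ1 (min δf (δ0 / 2)) with hδdef
  have hδpos : 0 < δ := lt_min hδ1 (lt_min hδf (by linarith))
  have hmemb : xb ∈ svInv (addFun F f) yb := by
    show yb - f xb ∈ F xb
    rwa [hf0, sub_zero]
  -- the key estimate, valid for any x with ‖x - xb‖ < δ, x ≠ xb
  have hkey : ∀ x, ‖x - xb‖ < δ → x ≠ xb →
      (γ2 - γ1) * edist x xb ≤ infEdist yb (addFun F f x) := by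
    intro x hxδ hxne
    have hx1 : ‖x - xb‖ < δ1 := hxδ.trans_le (min_le_left _ _)
    have hxf : ‖x - xb‖ < δf := hxδ.trans_le ((min_le_right _ _).trans (min_le_left _ _))
    have hx0 : ‖x - xb‖ < δ0 / 2 := hxδ.trans_le ((min_le_right _ _).trans (min_le_right _ _))
    have hisoeq := iso_infEdist F xb yb h hiso hx0
    have he0 : edist x xb ≠ 0 := by
      simp only [ne_eq, edist_eq_enorm_sub]
      simpa using sub_ne_zero_of_ne hxne
    have hetop : edist x xb ≠ ⊤ := edist_ne_top x xb
    have hIeq : infEdist yb (addFun F f x) = infEdist (yb - f x) (F x) := by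
      have hset : addFun F f x = (fun w => w + f x) '' (F x) := by
        ext z
        constructor
        · intro hz
          refine ⟨z - f x, hz, ?_⟩
          simp
        · rintro ⟨w, hw, rfl⟩
          simpa [addFun] using hw
      have hyb : yb = (fun w => w + f x) (yb - f x) := by simp
      rw [hset]
      nth_rewrite 1 [hyb]
      exact infEdist_image (isometry_add_right (f x))
    have hch : γ2 * edist x xb ≤ infEdist (yb - f x) (F x) + γ1 * edist x xb := by
      calc γ2 * edist x xb ≤ α * edist x xb := mul_le_mul_left hγ2α _
        _ = α * infEdist x (svInv F yb) := by rw [hisoeq]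
        _ ≤ infEdist yb (F x) := hα x hx1
        _ ≤ infEdist (yb - f x) (F x) + edist yb (yb - f x) :=
            infEdist_le_infEdist_add_edist
        _ ≤ infEdist (yb - f x) (F x) + γ1 * edist x xb := by
            apply add_le_add_right
            have : edist yb (yb - f x) = (‖f x‖₊ : ℝ≥0∞) := by
              rw [edist_eq_enorm_sub]
              congr 1
              simp
            rw [this]
            exact hfb x hxne hxf
    rw [hIeq]
    have hsubmul : (γ2 - γ1) * edist x xb = γ2 * edist x xb - γ1 * edist x xb :=
      ENNReal.sub_mul (fun _ _ => hetop)
    rw [hsubmul]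
    exact tsub_le_iff_right.mpr hch
  constructor
  · -- subregularity of the perturbed map
    refine ⟨(γ2 - γ1).toNNReal, ?_, δ, hδpos, ?_⟩
    · have hpos : (0:ℝ≥0∞) < γ2 - γ1 := tsub_pos_iff_lt.mpr hγ1b
      exact ENNReal.toNNReal_pos hpos.ne' (ENNReal.sub_ne_top hγ2top)
    · intro x hxδ
      by_cases hxne : x = xb
      · subst hxne
        have hz : infEdist x (svInv (addFun F f) yb) = 0 := infEdist_zero_of_mem hmemb
        rw [hz, mul_zero]
        exact zero_le
      · have hco : ((γ2 - γ1).toNNReal : ℝ≥0∞) = γ2 - γ1 :=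
          ENNReal.coe_toNNReal (ENNReal.sub_ne_top hγ2top)
        rw [hco]
        calc (γ2 - γ1) * infEdist x (svInv (addFun F f) yb)
            ≤ (γ2 - γ1) * edist x xb :=
              mul_le_mul_right (infEdist_le_edist_of_mem hmemb) _
          _ ≤ infEdist yb (addFun F f x) := hkey x hxδ hxne
  · -- isolation for the perturbed map
    refine ⟨δ, hδpos, fun x hx hxδ => ?_⟩
    by_contra hxne
    have hx1 : ‖x - xb‖ < δ1 := hxδ.trans_le (min_le_left _ _)
    have hxf : ‖x - xb‖ < δf := hxδ.trans_le ((min_le_right _ _).trans (min_le_left _ _))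
    have hx0 : ‖x - xb‖ < δ0 / 2 := hxδ.trans_le ((min_le_right _ _).trans (min_le_right _ _))
    have hisoeq := iso_infEdist F xb yb h hiso hx0
    have he0 : edist x xb ≠ 0 := by
      simp only [ne_eq, edist_eq_enorm_sub]
      simpa using sub_ne_zero_of_ne hxne
    have hetop : edist x xb ≠ ⊤ := edist_ne_top x xb
    have hmem' : yb - f x ∈ F x := hx
    have hup : infEdist yb (F x) ≤ γ1 * edist x xb := by
      calc infEdist yb (F x) ≤ edist yb (yb - f x) := infEdist_le_edist_of_mem hmem'
        _ = (‖f x‖₊ : ℝ≥0∞) := by rw [edist_eq_enorm_sub]; congr 1; simp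
        _ ≤ γ1 * edist x xb := hfb x hxne hxf
    have hdown : γ2 * edist x xb ≤ infEdist yb (F x) := by
      calc γ2 * edist x xb ≤ α * edist x xb := mul_le_mul_left hγ2α _
        _ = α * infEdist x (svInv F yb) := by rw [hisoeq]
        _ ≤ infEdist yb (F x) := hα x hx1
    have : γ2 ≤ γ1 := (ENNReal.mul_le_mul_iff_left he0 hetop).mp (hdown.trans hup)
    exact absurd this (not_le.mpr hγ1b)


lemma exists_seq_rec {α : Type*} (P : ℕ → α → Prop) (R : ℕ → α → α → Prop)
    (h0 : ∃ a, P 0 a) (hstep : ∀ k a, P k a → ∃ b, P (k+1) b ∧ R k a b) :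
    ∃ g : ℕ → α, (∀ k, P k (g k)) ∧ (∀ k, R k (g k) (g (k+1))) := by
  choose b hb1 hb2 using hstep
  let g : ∀ k : ℕ, {a : α // P k a} := fun k =>
    Nat.rec ⟨h0.choose, h0.choose_spec⟩ (fun k p => ⟨b k p.1 p.2, hb1 k p.1 p.2⟩) k
  exact ⟨fun k => (g k).1, fun k => (g k).2, fun k => hb2 k (g k).1 (g k).2⟩

/-- Existence of a slowly varying (in log scale) interpolant through prescribed
values at prescribed scales. -/
lemma exists_interpolant (ℓ : ℕ → ℝ) (w : ℕ → Y) (T : ℝ) (hT : 0 ≤ T)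
    (hw : ∀ k, ‖w k‖ ≤ T)
    (hgap : ∀ k, ℓ (k+1) + ((k:ℝ)+1) * (2*T+1) < ℓ k) :
    ∃ U : ℝ → Y,
      (∀ k, U (ℓ k) = w k) ∧
      (∀ t, ‖U t‖ ≤ T) ∧
      (∀ t1 t2 : ℝ, ‖U t1 - U t2‖ ≤ |t1 - t2|) ∧
      (∀ (N : ℕ) (t : ℝ), t < ℓ N →
        (∃ h > (0:ℝ), ∃ a b : Y, ‖b‖ ≤ 1/((N:ℝ)+1) ∧
          ∀ m, t ≤ m → m ≤ t + h → U m = a + m • b) ∧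
        (∃ h > (0:ℝ), ∃ a b : Y, ‖b‖ ≤ 1/((N:ℝ)+1) ∧
          ∀ m, t - h ≤ m → m ≤ t → U m = a + m • b)) := by
  classical
  have hgappos : ∀ k, 0 < ℓ k - ℓ (k+1) := by
    intro k
    have := hgap k
    nlinarith [Nat.cast_nonneg (α := ℝ) k]
  have hgap2T : ∀ k, 2*T ≤ ℓ k - ℓ (k+1) := by
    intro k
    have := hgap k
    nlinarith [Nat.cast_nonneg (α := ℝ) k]
  have hsucc : ∀ k, ℓ (k+1) < ℓ k := fun k => by linarith [hgappos k]
  have hsa : StrictAnti ℓ := strictAnti_nat_of_succ_lt hsucc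
  have hanti : Antitone ℓ := hsa.antitone
  have hlb : ∀ k : ℕ, ℓ k ≤ ℓ 0 - k := by
    intro k
    induction k with
    | zero => simp
    | succ n ih =>
      have h1 := hgap n
      have h2 : (1:ℝ) ≤ ((n:ℝ)+1) * (2*T+1) := by nlinarith [Nat.cast_nonneg (α := ℝ) n]
      push_cast
      push_cast at ih
      linarith
  have hex : ∀ t : ℝ, ∃ k, ℓ k < t := by
    intro t
    obtain ⟨n, hn⟩ := exists_nat_gt (ℓ 0 - t)
    exact ⟨n, by have := hlb n; linarith⟩
  set U : ℝ → Y := fun t =>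
    if hn : Nat.find (hex t) = 0 then w 0 else
      w (Nat.find (hex t) - 1) +
        ((ℓ (Nat.find (hex t) - 1) - t) /
          (ℓ (Nat.find (hex t) - 1) - ℓ (Nat.find (hex t)))) •
            (w (Nat.find (hex t)) - w (Nat.find (hex t) - 1)) with hU
  -- evaluation on closed pieces
  have hUeval : ∀ (m : ℕ) (t : ℝ), ℓ (m+1) ≤ t → t ≤ ℓ m →
      U t = w m + ((ℓ m - t) / (ℓ m - ℓ (m+1))) • (w (m+1) - w m) := by
    intro m t h1 h2
    rcases eq_or_lt_of_le h1 with heq | hlt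
    · -- t = ℓ (m+1) : the find is m+2, but the formula value agrees
      have hfind : Nat.find (hex t) = m + 2 := by
        rw [Nat.find_eq_iff]
        constructor
        · rw [← heq]; exact hsucc (m+1)
        · intro j hj
          have hj' : j ≤ m + 1 := by omega
          exact not_lt.mpr (heq ▸ hanti hj')
      rw [hU]
      simp only [hfind]
      rw [dif_neg (by omega)]
      have hm1 : m + 2 - 1 = m + 1 := by omega
      have hne : ℓ m - ℓ (m+1) ≠ 0 := (hgappos m).ne'
      rw [hm1, ← heq, sub_self, zero_div, zero_smul, add_zero, div_self hne, one_smul]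
      abel
    · have hfind : Nat.find (hex t) = m + 1 := by
        rw [Nat.find_eq_iff]
        refine ⟨hlt, fun j hj => ?_⟩
        have hj' : j ≤ m := by omega
        exact not_lt.mpr (h2.trans (hanti hj'))
      rw [hU]
      simp only [hfind]
      rw [dif_neg (by omega)]
      norm_num
  have hUtop : ∀ t, ℓ 0 ≤ t → U t = w 0 := by
    intro t ht
    rcases eq_or_lt_of_le ht with heq | hlt
    · have hfind : Nat.find (hex t) = 1 := by
        rw [Nat.find_eq_iff]
        refine ⟨by rw [← heq]; exact hsucc 0, fun j hj => ?_⟩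
        have : j = 0 := by omega
        subst this
        exact not_lt.mpr heq.ge
      rw [hU]
      simp only [hfind]
      rw [dif_neg (by omega)]
      norm_num
      rw [← heq]
      simp
    · have hfind : Nat.find (hex t) = 0 := by
        rw [Nat.find_eq_zero]
        exact hlt
      rw [hU]
      simp only [hfind]
      simp
  -- location of an arbitrary point
  have hUloc : ∀ t : ℝ, ℓ 0 ≤ t ∨ ∃ m, ℓ (m+1) ≤ t ∧ t ≤ ℓ m := by
    intro t
    by_cases htop : ℓ 0 ≤ t
    · exact Or.inl htop
    · right
      push_neg at htop
      have hfpos : Nat.find (hex t) ≠ 0 := by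
        intro h0
        have := Nat.find_spec (hex t)
        rw [h0] at this
        linarith
      obtain ⟨m, hm⟩ := Nat.exists_eq_succ_of_ne_zero hfpos
      refine ⟨m, ?_, ?_⟩
      · have := Nat.find_spec (hex t)
        rw [hm] at this
        exact this.le
      · have := Nat.find_min (hex t) (m := m) (by omega)
        exact not_lt.mp this
  -- uniform norm bound
  have hUnorm : ∀ t, ‖U t‖ ≤ T := by
    intro t
    rcases hUloc t with htop | ⟨m, h1, h2⟩
    · rw [hUtop t htop]; exact hw 0
    · set θ : ℝ := (ℓ m - t) / (ℓ m - ℓ (m+1)) with hθ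
      have hθ0 : 0 ≤ θ := div_nonneg (by linarith) (hgappos m).le
      have hθ1 : θ ≤ 1 := by
        rw [hθ, div_le_one (hgappos m)]
        linarith
      have heq : U t = (1-θ) • w m + θ • w (m+1) := by
        rw [hUeval m t h1 h2, ← hθ]
        module
      rw [heq]
      calc ‖(1-θ) • w m + θ • w (m+1)‖ ≤ ‖(1-θ) • w m‖ + ‖θ • w (m+1)‖ := norm_add_le _ _
        _ = (1-θ) * ‖w m‖ + θ * ‖w (m+1)‖ := by
            rw [norm_smul, norm_smul, Real.norm_eq_abs, Real.norm_eq_abs,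
              abs_of_nonneg (by linarith), abs_of_nonneg hθ0]
        _ ≤ (1-θ) * T + θ * T := by
            have hm1 := hw m; have hm2 := hw (m+1)
            have h1' : (0:ℝ) ≤ 1 - θ := by linarith
            exact add_le_add (mul_le_mul_of_nonneg_left hm1 h1')
              (mul_le_mul_of_nonneg_left hm2 hθ0)
        _ = T := by ring
  -- difference bound within one closed piece
  have hpiece : ∀ (m : ℕ) (t1 t2 : ℝ), ℓ (m+1) ≤ t1 → t1 ≤ t2 → t2 ≤ ℓ m →
      ‖U t2 - U t1‖ ≤ t2 - t1 := by
    intro m t1 t2 h1 h12 h2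
    have e1 : U t2 - U t1 =
        (((ℓ m - t2) / (ℓ m - ℓ (m+1))) - ((ℓ m - t1) / (ℓ m - ℓ (m+1)))) • (w (m+1) - w m) := by
      rw [hUeval m t1 h1 (h12.trans h2), hUeval m t2 (h1.trans h12) h2, sub_smul]
      abel
    have e2 : ((ℓ m - t2) / (ℓ m - ℓ (m+1))) - ((ℓ m - t1) / (ℓ m - ℓ (m+1)))
        = (t1 - t2) / (ℓ m - ℓ (m+1)) := by ring
    rw [e1, e2, norm_smul, Real.norm_eq_abs]
    have hg := hgappos m
    have hgT := hgap2T m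
    have hΔ : ‖w (m+1) - w m‖ ≤ 2*T := by
      calc ‖w (m+1) - w m‖ ≤ ‖w (m+1)‖ + ‖w m‖ := norm_sub_le _ _
        _ ≤ 2*T := by have := hw m; have := hw (m+1); linarith
    have habs : |(t1 - t2) / (ℓ m - ℓ (m+1))| = (t2 - t1) / (ℓ m - ℓ (m+1)) := by
      rw [abs_div, abs_of_pos hg, abs_sub_comm, abs_of_nonneg (by linarith)]
    rw [habs]
    calc (t2 - t1) / (ℓ m - ℓ (m+1)) * ‖w (m+1) - w m‖
        ≤ (t2 - t1) / (ℓ m - ℓ (m+1)) * (ℓ m - ℓ (m+1)) := by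
          exact mul_le_mul_of_nonneg_left (hΔ.trans hgT) (div_nonneg (by linarith) hg.le)
      _ = t2 - t1 := div_mul_cancel₀ _ hg.ne'
  -- the weak index
  have hexw : ∀ t : ℝ, ∃ k, ℓ k ≤ t := fun t => (hex t).imp (fun k hk => hk.le)
  set J : ℝ → ℕ := fun t => Nat.find (hexw t) with hJ
  have hJ1 : ∀ t, ℓ (J t) ≤ t := fun t => Nat.find_spec (hexw t)
  have hJ2 : ∀ (t : ℝ) (j : ℕ), j < J t → t < ℓ j := fun t j hj =>
    not_le.mp (Nat.find_min (hexw t) hj)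
  have hJmono : ∀ t1 t2 : ℝ, t1 ≤ t2 → J t2 ≤ J t1 := by
    intro t1 t2 h12
    exact Nat.find_mono (fun k hk => hk.trans h12)
  -- global 1-Lipschitz bound
  have hlip : ∀ t1 t2 : ℝ, t1 ≤ t2 → ‖U t2 - U t1‖ ≤ t2 - t1 := by
    have main : ∀ n (t1 t2 : ℝ), J t1 = n → t1 ≤ t2 → ‖U t2 - U t1‖ ≤ t2 - t1 := by
      intro n
      induction n using Nat.strong_induction_on with
      | _ n IH =>
        intro t1 t2 hn h12
        by_cases hn2 : J t2 = n
        · cases n with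
          | zero =>
            have ht1 : ℓ 0 ≤ t1 := by have := hJ1 t1; rwa [hn] at this
            have ht2 : ℓ 0 ≤ t2 := ht1.trans h12
            rw [hUtop t1 ht1, hUtop t2 ht2, sub_self, norm_zero]
            linarith
          | succ m =>
            have ht1 : ℓ (m+1) ≤ t1 := by have := hJ1 t1; rwa [hn] at this
            have ht2 : t2 < ℓ m := hJ2 t2 m (by omega)
            exact hpiece m t1 t2 ht1 h12 ht2.le
        · have hle : J t2 ≤ J t1 := hJmono t1 t2 h12
          have hlt : J t2 < n := by omega
          have hnpos : n ≠ 0 := by omega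
          obtain ⟨m, hm⟩ := Nat.exists_eq_succ_of_ne_zero hnpos
          have ht1m : t1 < ℓ m := hJ2 t1 m (by omega)
          have hmt2 : ℓ m ≤ t2 := by
            have h1 : J t2 ≤ m := by omega
            exact (hanti h1).trans (hJ1 t2)
          have hJℓm : J (ℓ m) ≤ m := Nat.find_le le_rfl
          have hsplit : U t2 - U t1 = (U t2 - U (ℓ m)) + (U (ℓ m) - U t1) := by abel
          have hb1 : ‖U t2 - U (ℓ m)‖ ≤ t2 - ℓ m :=
            IH (J (ℓ m)) (by omega) (ℓ m) t2 rfl hmt2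
          have hb2 : ‖U (ℓ m) - U t1‖ ≤ ℓ m - t1 := by
            have hℓ1 : ℓ (m+1) ≤ t1 := by have := hJ1 t1; rwa [hn, hm] at this
            exact hpiece m t1 (ℓ m) hℓ1 ht1m.le le_rfl
          calc ‖U t2 - U t1‖ ≤ ‖U t2 - U (ℓ m)‖ + ‖U (ℓ m) - U t1‖ := by
                rw [hsplit]; exact norm_add_le _ _
            _ ≤ t2 - t1 := by linarith
    exact fun t1 t2 h12 => main (J t1) t1 t2 rfl h12
  have hlipabs : ∀ t1 t2 : ℝ, ‖U t1 - U t2‖ ≤ |t1 - t2| := by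
    intro t1 t2
    rcases le_total t1 t2 with h | h
    · rw [norm_sub_rev, abs_sub_comm, abs_of_nonneg (by linarith)]
      exact hlip t1 t2 h
    · rw [abs_of_nonneg (by linarith)]
      exact hlip t2 t1 h
  -- affine model on one closed piece
  have hpmodel : ∀ m : ℕ, ∃ a b : Y, ‖b‖ ≤ 2*T / (ℓ m - ℓ (m+1)) ∧
      ∀ r, ℓ (m+1) ≤ r → r ≤ ℓ m → U r = a + r • b := by
    intro m
    have hg := hgappos m
    refine ⟨w m + (ℓ m / (ℓ m - ℓ (m+1))) • (w (m+1) - w m),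
      (-(1 / (ℓ m - ℓ (m+1)))) • (w (m+1) - w m), ?_, ?_⟩
    · rw [norm_smul, Real.norm_eq_abs, abs_neg, abs_of_pos (by positivity)]
      have hΔ : ‖w (m+1) - w m‖ ≤ 2*T := by
        calc ‖w (m+1) - w m‖ ≤ ‖w (m+1)‖ + ‖w m‖ := norm_sub_le _ _
          _ ≤ 2*T := by have := hw m; have := hw (m+1); linarith
      rw [div_eq_mul_inv (2*T), mul_comm (2*T), one_div]
      exact mul_le_mul_of_nonneg_left hΔ (by positivity)
    · intro r h1 h2
      rw [hUeval m r h1 h2]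
      have hne : ℓ m - ℓ (m+1) ≠ 0 := hg.ne'
      rw [smul_smul, add_assoc, ← add_smul]
      congr 2
      field_simp
      ring
  -- slope comparison
  have hslope : ∀ (m N : ℕ), N ≤ m → 2*T / (ℓ m - ℓ (m+1)) ≤ 1 / ((N:ℝ)+1) := by
    intro m N hNm
    have hg := hgappos m
    have hgap' := hgap m
    have hcast : ((N:ℝ)+1) ≤ ((m:ℝ)+1) := by
      have : (N:ℝ) ≤ (m:ℝ) := Nat.cast_le.mpr hNm
      linarith
    have hNpos : (0:ℝ) < (N:ℝ)+1 := by positivity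
    rw [div_le_div_iff₀ hg hNpos]
    nlinarith [Nat.cast_nonneg (α := ℝ) N]
  refine ⟨U, ?_, hUnorm, hlipabs, ?_⟩
  · intro k
    rw [hUeval k (ℓ k) (hsucc k).le le_rfl, sub_self, zero_div, zero_smul, add_zero]
  · -- the local models
    intro N t ht
    have hℓn : ℓ (J t) ≤ t := hJ1 t
    have hNn : N < J t := by
      by_contra hc
      push_neg at hc
      exact absurd ((hanti hc).trans hℓn) (not_le.mpr ht)
    obtain ⟨n', hn'⟩ : ∃ n', J t = n' + 1 := ⟨J t - 1, by omega⟩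
    have hNn' : N ≤ n' := by omega
    have htn' : t < ℓ n' := hJ2 t n' (by omega)
    have hℓn' : ℓ (n' + 1) ≤ t := by rw [← hn']; exact hℓn
    obtain ⟨a, b, hb, hmod⟩ := hpmodel n'
    have hbN : ‖b‖ ≤ 1 / ((N:ℝ)+1) := hb.trans (hslope n' N hNn')
    constructor
    · -- upward model
      refine ⟨ℓ n' - t, by linarith, a, b, hbN, ?_⟩
      intro m hm1 hm2
      exact hmod m (hℓn'.trans hm1) (by linarith)
    · -- downward model
      rcases eq_or_lt_of_le hℓn' with heq | hlt
      · -- t is exactly the bottom knot : go into the next piece down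
        obtain ⟨a2, b2, hb2, hmod2⟩ := hpmodel (n'+1)
        have hbN2 : ‖b2‖ ≤ 1 / ((N:ℝ)+1) := hb2.trans (hslope (n'+1) N (by omega))
        refine ⟨ℓ (n'+1) - ℓ (n'+1+1), by linarith [hgappos (n'+1)], a2, b2, hbN2, ?_⟩
        intro m hm1 hm2
        exact hmod2 m (by linarith [heq]) (by rw [heq]; exact hm2)
      · refine ⟨t - ℓ (n'+1), by linarith, a, b, hbN, ?_⟩
        intro m hm1 hm2
        exact hmod m (by linarith) (by linarith)

set_option maxHeartbeats 1000000 in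
lemma clm_le_of_norm_le (f : X → Y) (xb : X) {c : ℝ≥0∞} (hctop : c ≠ ⊤)
    (hTpos : 0 < c.toReal) (hf0 : f xb = 0)
    (hfnorm : ∀ x : X, ‖f x‖ ≤ c.toReal * ‖x - xb‖) :
    clmMod f xb ≤ c := by
  set T : ℝ := c.toReal with hT
  rw [clmMod, Filter.limsup_eq]
  apply sInf_le
  simp only [Set.mem_setOf_eq]
  apply Filter.eventually_of_mem (self_mem_nhdsWithin)
  intro x hx
  have hxne : x ≠ xb := hx
  have hne0 : edist x xb ≠ 0 := by
    simp only [ne_eq, edist_eq_enorm_sub]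
    simpa using sub_ne_zero_of_ne hxne
  rw [hf0]
  have hed : edist (f x) 0 = (‖f x‖₊ : ℝ≥0∞) := by
    rw [edist_eq_enorm_sub, sub_zero]; rfl
  rw [hed]
  rw [ENNReal.div_le_iff_le_mul (Or.inl hne0) (Or.inl (edist_ne_top x xb))]
  have h1 : (‖f x‖₊ : ℝ≥0∞) = ENNReal.ofReal ‖f x‖ := (ofReal_norm _).symm
  have h2 : edist x xb = ENNReal.ofReal ‖x - xb‖ := by
    rw [edist_dist, dist_eq_norm]
  have h3 : c = ENNReal.ofReal T := (ENNReal.ofReal_toReal hctop).symm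
  rw [h1, h2, h3, ← ENNReal.ofReal_mul hTpos.le]
  exact ENNReal.ofReal_le_ofReal (hfnorm x)

set_option maxHeartbeats 1000000 in
lemma radial_lipschitz (xb : X) (U : ℝ → Y) (T : ℝ) (hTpos : 0 < T)
    (hU2 : ∀ t, ‖U t‖ ≤ T) (hU3 : ∀ t1 t2 : ℝ, ‖U t1 - U t2‖ ≤ |t1 - t2|) :
    ∀ x : X, x ≠ xb → ∃ (K : ℝ≥0) (ρ : ℝ), 0 < ρ ∧
      LipschitzOnWith K (fun z => ‖z - xb‖ • U (Real.log ‖z - xb‖)) (ball x ρ) := by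
  intro x hxne
  set f : X → Y := fun z => ‖z - xb‖ • U (Real.log ‖z - xb‖) with hf
  set r : ℝ := ‖x - xb‖ with hr
  have hrpos : 0 < r := by
    rw [hr, norm_pos_iff, sub_ne_zero]
    exact hxne
  refine ⟨Real.toNNReal (T + 3), r/2, by linarith, ?_⟩
  apply LipschitzOnWith.of_dist_le_mul
  intro z1 hz1 z2 hz2
  have hb1 : r/2 < ‖z1 - xb‖ := by
    have h1 : dist z1 x < r/2 := Metric.mem_ball.mp hz1
    have h2 : |‖z1 - xb‖ - ‖x - xb‖| ≤ ‖z1 - x‖ := by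
      have := abs_norm_sub_norm_le (z1 - xb) (x - xb)
      rwa [show (z1 - xb) - (x - xb) = z1 - x by abel] at this
    rw [dist_eq_norm] at h1
    rw [abs_le] at h2
    rw [← hr] at h2
    linarith [h2.1]
  have hb2 : r/2 < ‖z2 - xb‖ := by
    have h1 : dist z2 x < r/2 := Metric.mem_ball.mp hz2
    have h2 : |‖z2 - xb‖ - ‖x - xb‖| ≤ ‖z2 - x‖ := by
      have := abs_norm_sub_norm_le (z2 - xb) (x - xb)
      rwa [show (z2 - xb) - (x - xb) = z2 - x by abel] at this
    rw [dist_eq_norm] at h1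
    rw [abs_le] at h2
    rw [← hr] at h2
    linarith [h2.1]
  have hb2' : ‖z2 - xb‖ < 3*r/2 := by
    have h1 : dist z2 x < r/2 := Metric.mem_ball.mp hz2
    have h2 : |‖z2 - xb‖ - ‖x - xb‖| ≤ ‖z2 - x‖ := by
      have := abs_norm_sub_norm_le (z2 - xb) (x - xb)
      rwa [show (z2 - xb) - (x - xb) = z2 - x by abel] at this
    rw [dist_eq_norm] at h1
    rw [abs_le] at h2
    rw [← hr] at h2
    linarith [h2.2]
  set ρ1 : ℝ := ‖z1 - xb‖ with hρ1
  set ρ2 : ℝ := ‖z2 - xb‖ with hρ2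
  have hρd : |ρ1 - ρ2| ≤ ‖z1 - z2‖ := by
    have := abs_norm_sub_norm_le (z1 - xb) (z2 - xb)
    rwa [show (z1 - xb) - (z2 - xb) = z1 - z2 by abel] at this
  have hlogd : |Real.log ρ1 - Real.log ρ2| ≤ |ρ1 - ρ2| / (r/2) := by
    have key : ∀ a b : ℝ, r/2 < a → r/2 < b → Real.log a - Real.log b ≤ |a - b| / (r/2) := by
      intro a b ha hb
      have hbpos : 0 < b := by linarith
      have hapos : 0 < a := by linarith
      have h1 : Real.log a - Real.log b = Real.log (a / b) := (Real.log_div hapos.ne' hbpos.ne').symm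
      have h2 : Real.log (a / b) ≤ a / b - 1 := Real.log_le_sub_one_of_pos (by positivity)
      have h3 : a / b - 1 = (a - b) / b := by field_simp
      have h4 : (a - b) / b ≤ |a - b| / (r/2) := by
        apply div_le_div₀ (abs_nonneg _) (le_abs_self _) (by linarith) hb.le
      linarith
    rw [abs_sub_le_iff]
    constructor
    · exact key ρ1 ρ2 hb1 hb2
    · rw [abs_sub_comm]
      exact key ρ2 ρ1 hb2 hb1
  have hsplit : f z1 - f z2 = (ρ1 - ρ2) • U (Real.log ρ1)
      + ρ2 • (U (Real.log ρ1) - U (Real.log ρ2)) := by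
    rw [hf]
    simp only
    rw [← hρ1, ← hρ2]
    module
  rw [dist_eq_norm, hsplit]
  calc ‖(ρ1 - ρ2) • U (Real.log ρ1) + ρ2 • (U (Real.log ρ1) - U (Real.log ρ2))‖
      ≤ ‖(ρ1 - ρ2) • U (Real.log ρ1)‖ + ‖ρ2 • (U (Real.log ρ1) - U (Real.log ρ2))‖ :=
        norm_add_le _ _
    _ ≤ |ρ1 - ρ2| * T + ρ2 * (|Real.log ρ1 - Real.log ρ2|) := by
        apply add_le_add
        · rw [norm_smul, Real.norm_eq_abs]
          exact mul_le_mul_of_nonneg_left (hU2 _) (abs_nonneg _)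
        · rw [norm_smul, Real.norm_eq_abs, abs_of_pos (by linarith : (0:ℝ) < ρ2)]
          exact mul_le_mul_of_nonneg_left (hU3 _ _) (by linarith)
    _ ≤ |ρ1 - ρ2| * T + (3*r/2) * (|ρ1 - ρ2| / (r/2)) := by
        have := mul_le_mul hb2'.le hlogd (abs_nonneg _) (by linarith : (0:ℝ) ≤ 3*r/2)
        linarith
    _ = (T + 3) * |ρ1 - ρ2| := by field_simp
    _ ≤ (T + 3) * ‖z1 - z2‖ := mul_le_mul_of_nonneg_left hρd (by linarith)
    _ = (Real.toNNReal (T + 3) : ℝ) * dist z1 z2 := by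
        rw [Real.coe_toNNReal _ (by linarith), dist_eq_norm]

set_option maxHeartbeats 1000000 in
lemma up_estimate (xb x : X) (U : ℝ → Y) (f : X → Y)
    (hfeq : ∀ z, f z = ‖z - xb‖ • U (Real.log ‖z - xb‖))
    (T δ ρh h1 : ℝ) (a1 b1 : Y) (p : (X →L[ℝ] ℝ) × (Y →L[ℝ] ℝ))
    (hxe : x ≠ xb) (hTpos : 0 < T) (hδpos : 0 < δ) (hρh : 0 < ρh) (h1pos : 0 < h1)
    (hb1n : ‖b1‖ ≤ 1/2)
    (hU2 : ∀ t, ‖U t‖ ≤ T)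
    (hmod1 : ∀ m, Real.log ‖x - xb‖ ≤ m → m ≤ Real.log ‖x - xb‖ + h1 → U m = a1 + m • b1)
    (hp2n : ‖p.2‖ ≤ 1)
    (hnrm : ∀ u : X, ‖u - x‖ + ‖f u - f x‖ < ρh →
      p.1 (u - x) + p.2 (f u - f x) ≤ (δ + δ) * (‖u - x‖ + ‖f u - f x‖)) :
    p.1 (x - xb) + p.2 (f x) ≤
      2*δ*(‖x - xb‖ + ‖f x‖ + 2*‖x - xb‖*‖b1‖) + 2*‖x - xb‖*‖b1‖ := by
  have hrpos : 0 < ‖x - xb‖ := by rw [norm_pos_iff, sub_ne_zero]; exact hxe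
  set r : ℝ := ‖x - xb‖ with hr
  set t : ℝ := Real.log r with ht
  have hfnorm : ∀ z : X, ‖f z‖ ≤ T * ‖z - xb‖ := by
    intro z
    rw [hfeq z, norm_smul, Real.norm_eq_abs, abs_of_nonneg (norm_nonneg _), mul_comm]
    exact mul_le_mul_of_nonneg_right (hU2 _) (norm_nonneg _)
  have hfxU : f x = r • U t := by rw [ht, hr]; exact hfeq x
  have hfx1 : f x = r • (a1 + t • b1) := by
    rw [hfxU, hmod1 t le_rfl (by linarith)]
  set s0 : ℝ := min (min (h1/2) (1/2)) (ρh / (2 * r * (3 + T))) with hs0def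
  have hs0pos : 0 < s0 := lt_min (lt_min (by linarith) one_half_pos) (by positivity)
  have hs0h : s0 ≤ h1/2 := (min_le_left _ _).trans (min_le_left _ _)
  have hs0half : s0 ≤ 1/2 := (min_le_left _ _).trans (min_le_right _ _)
  have hs0ρ : s0 ≤ ρh / (2*r*(3+T)) := min_le_right _ _
  set u : X := xb + (1+s0) • (x - xb) with hu
  have hux : u - x = s0 • (x - xb) := by rw [hu]; module
  have hnux : ‖u - x‖ = s0 * r := by
    rw [hux, norm_smul, Real.norm_eq_abs, abs_of_pos hs0pos, hr]
  have hub : u - xb = (1+s0) • (x - xb) := by rw [hu]; module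
  have hnub : ‖u - xb‖ = (1+s0) * r := by
    rw [hub, norm_smul, Real.norm_eq_abs, abs_of_pos (by linarith), hr]
  have hlogu : Real.log ‖u - xb‖ = t + Real.log (1+s0) := by
    rw [hnub, Real.log_mul (by linarith) hrpos.ne', ht, add_comm]
  have hls0 : 0 ≤ Real.log (1+s0) := Real.log_nonneg (by linarith)
  have hls2 : Real.log (1+s0) ≤ s0 := by
    have := Real.log_le_sub_one_of_pos (show (0:ℝ) < 1+s0 by linarith)
    linarith
  have hfu : f u = ((1+s0) * r) • (a1 + (t + Real.log (1+s0)) • b1) := by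
    rw [hfeq u, hlogu, hnub, hmod1 (t + Real.log (1+s0)) (by linarith) (by linarith)]
  have hdiff : f u - f x = s0 • f x + (((1+s0) * r) * Real.log (1+s0)) • b1 := by
    rw [hfu, hfx1]; module
  have hcb0 : 0 ≤ ((1+s0) * r) * Real.log (1+s0) :=
    mul_nonneg (by positivity) hls0
  have hcb : ((1+s0) * r) * Real.log (1+s0) ≤ 2*r*s0 := by nlinarith
  have hndiff : ‖f u - f x‖ ≤ s0 * (‖f x‖ + 2*r*‖b1‖) := by
    rw [hdiff]
    calc ‖s0 • f x + (((1+s0) * r) * Real.log (1+s0)) • b1‖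
        ≤ ‖s0 • f x‖ + ‖(((1+s0) * r) * Real.log (1+s0)) • b1‖ := norm_add_le _ _
      _ = s0 * ‖f x‖ + (((1+s0) * r) * Real.log (1+s0)) * ‖b1‖ := by
          have e1 : ‖s0 • f x‖ = s0 * ‖f x‖ := by
            rw [norm_smul, Real.norm_eq_abs, abs_of_pos hs0pos]
          have e2 : ‖(((1+s0) * r) * Real.log (1+s0)) • b1‖
              = (((1+s0) * r) * Real.log (1+s0)) * ‖b1‖ := by
            rw [norm_smul, Real.norm_eq_abs, abs_of_nonneg hcb0]
          rw [e1, e2]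
      _ ≤ s0 * ‖f x‖ + (2*r*s0) * ‖b1‖ := by nlinarith [norm_nonneg b1]
      _ = s0 * (‖f x‖ + 2*r*‖b1‖) := by ring
  have hok : ‖u - x‖ + ‖f u - f x‖ < ρh := by
    have hfT : ‖f x‖ ≤ T * r := by rw [hr]; exact hfnorm x
    have h2' : s0 * r + s0 * (‖f x‖ + 2*r*‖b1‖) ≤ s0 * (r * (3+T)) := by
      have : ‖f x‖ + 2*r*‖b1‖ ≤ T*r + r := by
        nlinarith [mul_le_mul_of_nonneg_left hb1n (by positivity : (0:ℝ) ≤ 2*r)]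
      nlinarith
    have h3' : s0 * (r * (3+T)) ≤ ρh / 2 := by
      have hpos : (0:ℝ) < 2*r*(3+T) := by positivity
      rw [le_div_iff₀ hpos] at hs0ρ
      nlinarith [hs0ρ]
    have := hndiff
    rw [hnux]
    linarith
  have happ := hnrm u hok
  have hlhs : p.1 (u - x) + p.2 (f u - f x)
      = s0 * (p.1 (x - xb)) + (s0 * (p.2 (f x))
        + (((1+s0) * r) * Real.log (1+s0)) * (p.2 b1)) := by
    rw [hux, hdiff]
    simp [map_smul, map_add, smul_eq_mul]
  have hPb : |p.2 b1| ≤ ‖b1‖ := by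
    calc |p.2 b1| = ‖p.2 b1‖ := (Real.norm_eq_abs _).symm
      _ ≤ ‖p.2‖ * ‖b1‖ := p.2.le_opNorm b1
      _ ≤ 1 * ‖b1‖ := mul_le_mul_of_nonneg_right hp2n (norm_nonneg _)
      _ = ‖b1‖ := one_mul _
  have hcPb : -(2*r*s0*‖b1‖) ≤ (((1+s0) * r) * Real.log (1+s0)) * (p.2 b1) := by
    have habs : |(((1+s0) * r) * Real.log (1+s0)) * (p.2 b1)| ≤ (2*r*s0)*‖b1‖ := by
      rw [abs_mul, abs_of_nonneg hcb0]
      exact mul_le_mul hcb hPb (abs_nonneg _) (by positivity)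
    have := neg_abs_le ((((1+s0) * r) * Real.log (1+s0)) * (p.2 b1))
    linarith
  have hRHS : (δ + δ) * (‖u - x‖ + ‖f u - f x‖)
      ≤ 2*δ*(s0*r + s0*(‖f x‖ + 2*r*‖b1‖)) := by
    have hle : ‖u - x‖ + ‖f u - f x‖ ≤ s0*r + s0*(‖f x‖ + 2*r*‖b1‖) := by
      rw [hnux]; linarith
    nlinarith [hδpos.le]
  have hmain : s0 * (p.1 (x - xb) + p.2 (f x))
      ≤ s0 * (2*δ*(r + ‖f x‖ + 2*r*‖b1‖) + 2*r*‖b1‖) := by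
    rw [hlhs] at happ
    nlinarith [happ, hRHS, hcPb]
  exact le_of_mul_le_mul_left hmain hs0pos

set_option maxHeartbeats 1000000 in
lemma down_estimate (xb x : X) (U : ℝ → Y) (f : X → Y)
    (hfeq : ∀ z, f z = ‖z - xb‖ • U (Real.log ‖z - xb‖))
    (T δ ρh h2 : ℝ) (a2 b2 : Y) (p : (X →L[ℝ] ℝ) × (Y →L[ℝ] ℝ))
    (hxe : x ≠ xb) (hTpos : 0 < T) (hδpos : 0 < δ) (hρh : 0 < ρh) (h2pos : 0 < h2)
    (hb2n : ‖b2‖ ≤ 1/2)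
    (hU2 : ∀ t, ‖U t‖ ≤ T)
    (hmod2 : ∀ m, Real.log ‖x - xb‖ - h2 ≤ m → m ≤ Real.log ‖x - xb‖ → U m = a2 + m • b2)
    (hp2n : ‖p.2‖ ≤ 1)
    (hnrm : ∀ u : X, ‖u - x‖ + ‖f u - f x‖ < ρh →
      p.1 (u - x) + p.2 (f u - f x) ≤ (δ + δ) * (‖u - x‖ + ‖f u - f x‖)) :
    -(p.1 (x - xb) + p.2 (f x)) ≤
      2*δ*(‖x - xb‖ + ‖f x‖ + 2*‖x - xb‖*‖b2‖) + 2*‖x - xb‖*‖b2‖ := by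
  have hrpos : 0 < ‖x - xb‖ := by rw [norm_pos_iff, sub_ne_zero]; exact hxe
  set r : ℝ := ‖x - xb‖ with hr
  set t : ℝ := Real.log r with ht
  have hfnorm : ∀ z : X, ‖f z‖ ≤ T * ‖z - xb‖ := by
    intro z
    rw [hfeq z, norm_smul, Real.norm_eq_abs, abs_of_nonneg (norm_nonneg _), mul_comm]
    exact mul_le_mul_of_nonneg_right (hU2 _) (norm_nonneg _)
  have hfxU : f x = r • U t := by rw [ht, hr]; exact hfeq x
  have hfx2 : f x = r • (a2 + t • b2) := by
    rw [hfxU, hmod2 t (by linarith) le_rfl]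
  set s0 : ℝ := min (min (h2/4) (1/2)) (ρh / (2 * r * (3 + T))) with hs0def
  have hs0pos : 0 < s0 := lt_min (lt_min (by linarith) one_half_pos) (by positivity)
  have hs0h : s0 ≤ h2/4 := (min_le_left _ _).trans (min_le_left _ _)
  have hs0half : s0 ≤ 1/2 := (min_le_left _ _).trans (min_le_right _ _)
  have hs0ρ : s0 ≤ ρh / (2*r*(3+T)) := min_le_right _ _
  have h1s : (0:ℝ) < 1 - s0 := by linarith
  set u : X := xb + (1-s0) • (x - xb) with hu
  have hux : u - x = (-s0) • (x - xb) := by rw [hu]; module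
  have hnux : ‖u - x‖ = s0 * r := by
    rw [hux, norm_smul, Real.norm_eq_abs, abs_neg, abs_of_pos hs0pos, hr]
  have hub : u - xb = (1-s0) • (x - xb) := by rw [hu]; module
  have hnub : ‖u - xb‖ = (1-s0) * r := by
    rw [hub, norm_smul, Real.norm_eq_abs, abs_of_pos h1s, hr]
  have hlogu : Real.log ‖u - xb‖ = t + Real.log (1-s0) := by
    rw [hnub, Real.log_mul h1s.ne' hrpos.ne', ht, add_comm]
  have hls0 : Real.log (1-s0) ≤ 0 := Real.log_nonpos (by linarith) (by linarith)
  have hls2 : -(Real.log (1-s0)) ≤ 2*s0 := by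
    have hinv := Real.log_le_sub_one_of_pos (show (0:ℝ) < (1-s0)⁻¹ by positivity)
    rw [Real.log_inv] at hinv
    have hiv : (1-s0)⁻¹ ≤ 1 + 2*s0 := by
      rw [inv_eq_one_div, div_le_iff₀ h1s]
      nlinarith
    linarith
  have hfu : f u = ((1-s0) * r) • (a2 + (t + Real.log (1-s0)) • b2) := by
    rw [hfeq u, hlogu, hnub, hmod2 (t + Real.log (1-s0)) (by linarith) (by linarith)]
  have hdiff : f u - f x = (-s0) • f x + (((1-s0) * r) * Real.log (1-s0)) • b2 := by
    rw [hfu, hfx2]; module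
  have hcb0 : ((1-s0) * r) * Real.log (1-s0) ≤ 0 :=
    mul_nonpos_of_nonneg_of_nonpos (mul_nonneg (by linarith) hrpos.le) hls0
  have hcb : |((1-s0) * r) * Real.log (1-s0)| ≤ 2*r*s0 := by
    rw [abs_of_nonpos hcb0]
    have heq' : -( ((1-s0) * r) * Real.log (1-s0)) = ((1-s0) * r) * (-(Real.log (1-s0))) := by
      ring
    rw [heq']
    have h0' : 0 ≤ -(Real.log (1-s0)) := by linarith
    have ha' : (1-s0) * r ≤ r := by nlinarith [hrpos.le, hs0pos.le]
    have key := mul_le_mul ha' hls2 h0' hrpos.le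
    linarith
  have hndiff : ‖f u - f x‖ ≤ s0 * (‖f x‖ + 2*r*‖b2‖) := by
    rw [hdiff]
    calc ‖(-s0) • f x + (((1-s0) * r) * Real.log (1-s0)) • b2‖
        ≤ ‖(-s0) • f x‖ + ‖(((1-s0) * r) * Real.log (1-s0)) • b2‖ := norm_add_le _ _
      _ = s0 * ‖f x‖ + |((1-s0) * r) * Real.log (1-s0)| * ‖b2‖ := by
          have e1 : ‖(-s0) • f x‖ = s0 * ‖f x‖ := by
            rw [norm_smul, Real.norm_eq_abs, abs_neg, abs_of_pos hs0pos]
          have e2 : ‖(((1-s0) * r) * Real.log (1-s0)) • b2‖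
              = |((1-s0) * r) * Real.log (1-s0)| * ‖b2‖ := by
            rw [norm_smul, Real.norm_eq_abs]
          rw [e1, e2]
      _ ≤ s0 * ‖f x‖ + (2*r*s0) * ‖b2‖ := by nlinarith [norm_nonneg b2, abs_nonneg (((1-s0) * r) * Real.log (1-s0))]
      _ = s0 * (‖f x‖ + 2*r*‖b2‖) := by ring
  have hok : ‖u - x‖ + ‖f u - f x‖ < ρh := by
    have hfT : ‖f x‖ ≤ T * r := by rw [hr]; exact hfnorm x
    have h2' : s0 * r + s0 * (‖f x‖ + 2*r*‖b2‖) ≤ s0 * (r * (3+T)) := by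
      have : ‖f x‖ + 2*r*‖b2‖ ≤ T*r + r := by
        nlinarith [mul_le_mul_of_nonneg_left hb2n (by positivity : (0:ℝ) ≤ 2*r)]
      nlinarith
    have h3' : s0 * (r * (3+T)) ≤ ρh / 2 := by
      have hpos : (0:ℝ) < 2*r*(3+T) := by positivity
      rw [le_div_iff₀ hpos] at hs0ρ
      nlinarith [hs0ρ]
    have := hndiff
    rw [hnux]
    linarith
  have happ := hnrm u hok
  have hlhs : p.1 (u - x) + p.2 (f u - f x)
      = -(s0 * (p.1 (x - xb))) + (-(s0 * (p.2 (f x)))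
        + (((1-s0) * r) * Real.log (1-s0)) * (p.2 b2)) := by
    rw [hux, hdiff]
    simp [map_smul, map_add, smul_eq_mul]
    try ring
  have hPb : |p.2 b2| ≤ ‖b2‖ := by
    calc |p.2 b2| = ‖p.2 b2‖ := (Real.norm_eq_abs _).symm
      _ ≤ ‖p.2‖ * ‖b2‖ := p.2.le_opNorm b2
      _ ≤ 1 * ‖b2‖ := mul_le_mul_of_nonneg_right hp2n (norm_nonneg _)
      _ = ‖b2‖ := one_mul _
  have hcPb : -(2*r*s0*‖b2‖) ≤ (((1-s0) * r) * Real.log (1-s0)) * (p.2 b2) := by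
    have habs : |(((1-s0) * r) * Real.log (1-s0)) * (p.2 b2)| ≤ (2*r*s0)*‖b2‖ := by
      rw [abs_mul]
      have := mul_le_mul hcb hPb (abs_nonneg _) (by positivity : (0:ℝ) ≤ 2*r*s0)
      linarith
    have := neg_abs_le ((((1-s0) * r) * Real.log (1-s0)) * (p.2 b2))
    linarith
  have hRHS : (δ + δ) * (‖u - x‖ + ‖f u - f x‖)
      ≤ 2*δ*(s0*r + s0*(‖f x‖ + 2*r*‖b2‖)) := by
    have hle : ‖u - x‖ + ‖f u - f x‖ ≤ s0*r + s0*(‖f x‖ + 2*r*‖b2‖) := by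
      rw [hnux]; linarith
    nlinarith [hδpos.le]
  have hmain : s0 * (-(p.1 (x - xb) + p.2 (f x)))
      ≤ s0 * (2*δ*(r + ‖f x‖ + 2*r*‖b2‖) + 2*r*‖b2‖) := by
    rw [hlhs] at happ
    nlinarith [happ, hRHS, hcPb]
  exact le_of_mul_le_mul_left hmain hs0pos

set_option maxHeartbeats 1000000 in
lemma radial_semismooth (xb : X) (s : ℕ → ℝ) (hspos : ∀ k, 0 < s k)
    (U : ℝ → Y) (T : ℝ) (hTpos : 0 < T) (hU2 : ∀ t, ‖U t‖ ≤ T)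
    (hU4 : ∀ (N : ℕ) (t : ℝ), t < Real.log (s N) →
      (∃ h > (0:ℝ), ∃ a b : Y, ‖b‖ ≤ 1/((N:ℝ)+1) ∧
        ∀ m, t ≤ m → m ≤ t + h → U m = a + m • b) ∧
      (∃ h > (0:ℝ), ∃ a b : Y, ‖b‖ ≤ 1/((N:ℝ)+1) ∧
        ∀ m, t - h ≤ m → m ≤ t → U m = a + m • b)) :
    SemismoothStarFun (fun z => ‖z - xb‖ • U (Real.log ‖z - xb‖)) xb := by
  set f : X → Y := fun z => ‖z - xb‖ • U (Real.log ‖z - xb‖) with hf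
  have hfeq : ∀ z, f z = ‖z - xb‖ • U (Real.log ‖z - xb‖) := fun z => rfl
  have hf0 : f xb = 0 := by rw [hfeq]; simp
  have hfnorm : ∀ x : X, ‖f x‖ ≤ T * ‖x - xb‖ := by
    intro x
    rw [hfeq x, norm_smul, Real.norm_eq_abs, abs_of_nonneg (norm_nonneg _), mul_comm]
    exact mul_le_mul_of_nonneg_right (hU2 _) (norm_nonneg _)
  intro ε hε
  obtain ⟨N0, hN0⟩ := exists_nat_gt (4/ε)
  set N : ℕ := N0 + 1 with hNdef
  have hNpos : (0:ℝ) < (N:ℝ) + 1 := by positivity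
  have hNe : 1/((N:ℝ)+1) ≤ ε/4 := by
    rw [div_le_div_iff₀ (by positivity) (by linarith)]
    have h4 : 4 < ε * N0 := by
      rw [div_lt_iff₀ hε] at hN0
      linarith [hN0]
    have hcast : (N0:ℝ) ≤ (N:ℝ) + 1 := by
      rw [hNdef]
      push_cast
      linarith
    nlinarith [hε.le]
  have hbhalf : 1/((N:ℝ)+1) ≤ 1/2 := by
    rw [div_le_div_iff₀ (by positivity) (by norm_num)]
    have : (1:ℝ) ≤ (N:ℝ) := by
      rw [hNdef]; push_cast; linarith [Nat.cast_nonneg (α := ℝ) N0]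
    linarith
  set δ : ℝ := min (ε/8) (min (1/2) (s N)) with hδdef
  have hδpos : 0 < δ := lt_min (by linarith) (lt_min one_half_pos (hspos N))
  have hδε : δ ≤ ε/8 := min_le_left _ _
  have hδhalf : δ ≤ 1/2 := (min_le_right _ _).trans (min_le_left _ _)
  have hδsN : δ ≤ s N := (min_le_right _ _).trans (min_le_right _ _)
  refine ⟨δ, hδpos, fun x hx p hp hmax => ?_⟩
  rw [hf0, sub_zero] at hx ⊢
  by_cases hxe : x = xb
  · subst hxe
    rw [hf0]
    simp only [sub_self, map_zero, add_zero, abs_zero, norm_zero]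
    positivity
  have hrpos : 0 < ‖x - xb‖ := by rw [norm_pos_iff, sub_ne_zero]; exact hxe
  have hfge : 0 ≤ ‖f x‖ := norm_nonneg _
  have hrδ : ‖x - xb‖ < δ := by linarith [hx, norm_nonneg (f x)]
  have htN : Real.log ‖x - xb‖ < Real.log (s N) :=
    Real.log_lt_log hrpos (lt_of_lt_of_le hrδ hδsN)
  obtain ⟨hupm, hdownm⟩ := hU4 N (Real.log ‖x - xb‖) htN
  obtain ⟨h1, h1pos, a1, b1, hb1, hmod1⟩ := hupm
  obtain ⟨h2, h2pos, a2, b2, hb2, hmod2⟩ := hdownm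
  have hp2n : ‖p.2‖ ≤ 1 := by rw [← hmax]; exact le_max_right _ _
  have hb1half : ‖b1‖ ≤ 1/2 := hb1.trans hbhalf
  have hb2half : ‖b2‖ ≤ 1/2 := hb2.trans hbhalf
  have hb1ε : ‖b1‖ ≤ ε/4 := hb1.trans hNe
  have hb2ε : ‖b2‖ ≤ ε/4 := hb2.trans hNe
  obtain ⟨ρh, hρh, hnrm⟩ := hp δ hδpos
  have hplus := up_estimate xb x U f hfeq T δ ρh h1 a1 b1 p hxe hTpos hδpos hρh h1pos
    hb1half hU2 hmod1 hp2n hnrm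
  have hminus := down_estimate xb x U f hfeq T δ ρh h2 a2 b2 p hxe hTpos hδpos hρh h2pos
    hb2half hU2 hmod2 hp2n hnrm
  have hB : ∀ b : Y, ‖b‖ ≤ 1/2 → ‖b‖ ≤ ε/4 →
      2*δ*(‖x - xb‖ + ‖f x‖ + 2*‖x - xb‖*‖b‖) + 2*‖x - xb‖*‖b‖
        ≤ ε*(‖x - xb‖ + ‖f x‖) := by
    intro b hbh hbe
    have k1 : 2*‖x - xb‖*‖b‖ ≤ ‖x - xb‖ := by
      nlinarith [mul_le_mul_of_nonneg_left hbh (by positivity : (0:ℝ) ≤ 2*‖x - xb‖)]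
    have k2 : 2*‖x - xb‖*‖b‖ ≤ ε*‖x - xb‖/2 := by
      nlinarith [mul_le_mul_of_nonneg_left hbe (by positivity : (0:ℝ) ≤ 2*‖x - xb‖)]
    have k0 : (0:ℝ) ≤ ‖x - xb‖ + ‖f x‖ + 2*‖x - xb‖*‖b‖ := by positivity
    have k3 : 2*δ*(‖x - xb‖ + ‖f x‖ + 2*‖x - xb‖*‖b‖)
        ≤ (ε/4)*(‖x - xb‖ + ‖f x‖ + ‖x - xb‖) := by
      apply mul_le_mul (by linarith) (by linarith) k0 (by linarith)
    nlinarith [mul_nonneg hε.le hfge, mul_nonneg hε.le hrpos.le]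
  rw [abs_le]
  constructor
  · linarith [hminus, hB b2 hb2half hb2ε]
  · linarith [hplus, hB b1 hb1half hb1ε]

set_option maxHeartbeats 1000000 in
lemma exists_destabilizer (F : X → Set Y) (xb : X) (yb : Y) (h : yb ∈ F xb)
    {c : ℝ≥0∞} (hc : srgMod F xb yb < c) (hctop : c ≠ ⊤) :
    ∃ f : X → Y, FirmlyCalm f xb ∧ SemismoothStarFun f xb ∧ f xb = 0 ∧
      ¬ StronglySubregular (addFun F f) xb yb ∧ clmMod f xb ≤ c := by
  classical
  have hc0 : (0:ℝ≥0∞) < c := zero_le.trans_lt hc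
  set T : ℝ := c.toReal with hT
  have hTpos : 0 < T := ENNReal.toReal_pos hc0.ne' hctop
  have hmeminv : xb ∈ svInv F yb := h
  -- dense failure of the modulus inequality
  have H : ∀ δ : ℝ, 0 < δ → ∃ x : X, ‖x - xb‖ < δ ∧ x ≠ xb ∧
      infEdist yb (F x) < c * edist x xb := by
    intro δ hδ
    have hnot : c ∉ {α : ℝ≥0∞ | ∃ δ > (0:ℝ), ∀ x, ‖x - xb‖ < δ →
        α * infEdist x (svInv F yb) ≤ infEdist yb (F x)} := by
      intro hmem
      exact absurd (le_sSup hmem) (not_le.mpr hc)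
    simp only [Set.mem_setOf_eq, not_exists, not_and, not_forall, not_le] at hnot
    obtain ⟨x, hx1, hx2⟩ := hnot δ hδ
    have hxne : x ≠ xb := by
      intro hxe
      subst hxe
      have hz : infEdist x (svInv F yb) = 0 := infEdist_zero_of_mem hmeminv
      rw [hz, mul_zero] at hx2
      exact absurd hx2 (not_lt.mpr zero_le)
    refine ⟨x, hx1, hxne, lt_of_lt_of_le hx2 ?_⟩
    exact mul_le_mul_right (infEdist_le_edist_of_mem hmeminv) c
  -- recursive choice of the scales
  obtain ⟨xs, hP, hR⟩ := exists_seq_rec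
    (P := fun _ x => x ≠ xb ∧ infEdist yb (F x) < c * edist x xb)
    (R := fun k x x' => ‖x' - xb‖ < ‖x - xb‖ * Real.exp (-(((k:ℝ)+1) * (2*T+1))))
    (by obtain ⟨x, _, hx2, hx3⟩ := H 1 one_pos; exact ⟨x, hx2, hx3⟩)
    (by
      intro k x hx
      have hxpos : 0 < ‖x - xb‖ := by
        rw [norm_pos_iff, sub_ne_zero]
        exact hx.1
      have hδ : 0 < ‖x - xb‖ * Real.exp (-(((k:ℝ)+1) * (2*T+1))) := by positivity
      obtain ⟨x', h1, h2, h3⟩ := H _ hδ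
      exact ⟨x', ⟨h2, h3⟩, h1⟩)
  set s : ℕ → ℝ := fun k => ‖xs k - xb‖ with hs
  have hxsne : ∀ k, xs k ≠ xb := fun k => (hP k).1
  have hspos : ∀ k, 0 < s k := by
    intro k
    rw [hs]
    simp only [norm_pos_iff, sub_ne_zero]
    exact hxsne k
  have hgood : ∀ k, infEdist yb (F (xs k)) < c * edist (xs k) xb := fun k => (hP k).2
  have hmultop : ∀ k, c * edist (xs k) xb ≠ ⊤ :=
    fun k => ENNReal.mul_ne_top hctop (edist_ne_top _ _)
  choose y hy1 hy2 using fun k => infEdist_lt_iff.mp (hgood k)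
  have hyT : ∀ k, ‖yb - y k‖ < T * s k := by
    intro k
    have := ENNReal.toReal_strict_mono (hmultop k) (hy2 k)
    rw [ENNReal.toReal_mul] at this
    rw [← hT] at this
    rwa [edist_dist, ENNReal.toReal_ofReal dist_nonneg, edist_dist,
      ENNReal.toReal_ofReal dist_nonneg, dist_eq_norm, dist_eq_norm] at this
  set w : ℕ → Y := fun k => (s k)⁻¹ • (yb - y k) with hw
  have hwT : ∀ k, ‖w k‖ ≤ T := by
    intro k
    rw [hw]
    simp only
    rw [norm_smul, Real.norm_eq_abs, abs_of_pos (inv_pos.mpr (hspos k))]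
    rw [inv_mul_le_iff₀ (hspos k)]
    calc ‖yb - y k‖ ≤ T * s k := (hyT k).le
      _ = s k * T := mul_comm _ _
  set ℓ : ℕ → ℝ := fun k => Real.log (s k) with hℓ
  have hgap : ∀ k, ℓ (k+1) + ((k:ℝ)+1) * (2*T+1) < ℓ k := by
    intro k
    have h1 : s (k+1) < s k * Real.exp (-(((k:ℝ)+1) * (2*T+1))) := hR k
    have h2 := Real.log_lt_log (hspos (k+1)) h1
    rw [Real.log_mul (hspos k).ne' (Real.exp_ne_zero _), Real.log_exp] at h2
    rw [hℓ]
    simp only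
    linarith
  obtain ⟨U, hU1, hU2, hU3, hU4⟩ := exists_interpolant ℓ w T hTpos.le hwT hgap
  set f : X → Y := fun x => ‖x - xb‖ • U (Real.log ‖x - xb‖) with hf
  have hf0 : f xb = 0 := by
    rw [hf]
    simp
  have hfx : ∀ k, f (xs k) = yb - y k := by
    intro k
    rw [hf]
    simp only
    rw [show Real.log ‖xs k - xb‖ = ℓ k from rfl, hU1 k, hw]
    simp only
    rw [smul_smul, show ‖xs k - xb‖ = s k from rfl, mul_inv_cancel₀ (hspos k).ne', one_smul]
  have hfnorm : ∀ x : X, ‖f x‖ ≤ T * ‖x - xb‖ := by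
    intro x
    rw [hf]
    simp only
    rw [norm_smul, Real.norm_eq_abs, abs_of_nonneg (norm_nonneg _), mul_comm]
    exact mul_le_mul_of_nonneg_right (hU2 _) (norm_nonneg _)
  have hclm : clmMod f xb ≤ c :=
    clm_le_of_norm_le f xb hctop hTpos hf0 hfnorm
  have hcalm : Calm f xb := lt_of_le_of_lt hclm hctop.lt_top
  have hfirm : FirmlyCalm f xb := by
    refine ⟨hcalm, 1, one_pos, fun x hxne _ => ?_⟩
    exact radial_lipschitz xb U T hTpos hU2 hU3 x hxne
  -- destruction of strong subregularity: xb is not isolated in the perturbed inverse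
  have hnss : ¬ StronglySubregular (addFun F f) xb yb := by
    rintro ⟨-, δi, hδi, hisol⟩
    have hexp : Real.exp (-(1:ℝ)) ≤ 1/2 := by
      rw [Real.exp_neg]
      rw [inv_le_comm₀ (Real.exp_pos 1) (by norm_num)]
      have := Real.add_one_le_exp 1
      linarith
    have hdecay : ∀ k, s (k+1) ≤ s k * (1/2) := by
      intro k
      have h1 : s (k+1) < s k * Real.exp (-(((k:ℝ)+1) * (2*T+1))) := hR k
      have h2 : Real.exp (-(((k:ℝ)+1) * (2*T+1))) ≤ Real.exp (-(1:ℝ)) := by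
        apply Real.exp_le_exp.mpr
        have : (1:ℝ) ≤ ((k:ℝ)+1) * (2*T+1) := by nlinarith [Nat.cast_nonneg (α := ℝ) k]
        linarith
      have := mul_le_mul_of_nonneg_left (h2.trans hexp) (hspos k).le
      linarith
    have hsk : ∀ k, s k ≤ s 0 * (1/2)^k := by
      intro k
      induction k with
      | zero => simp
      | succ n ih =>
        calc s (n+1) ≤ s n * (1/2) := hdecay n
          _ ≤ (s 0 * (1/2)^n) * (1/2) := by nlinarith
          _ = s 0 * (1/2)^(n+1) := by ring
    obtain ⟨n, hn⟩ : ∃ n : ℕ, s 0 * (1/2)^n < δi := by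
      obtain ⟨n, hn⟩ := _root_.exists_pow_lt_of_lt_one (show (0:ℝ) < δi / s 0 from div_pos hδi (hspos 0))
        (by norm_num : (1:ℝ)/2 < 1)
      refine ⟨n, ?_⟩
      rw [lt_div_iff₀ (hspos 0)] at hn
      linarith
    have hmem : xs n ∈ svInv (addFun F f) yb := by
      show yb - f (xs n) ∈ F (xs n)
      rw [hfx n, _root_.sub_sub_cancel]
      exact hy1 n
    exact absurd (hisol (xs n) hmem (lt_of_le_of_lt (hsk n) hn)) (hxsne n)
  have hsss : SemismoothStarFun f xb :=
    radial_semismooth xb s hspos U T hTpos hU2 hU4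
  exact ⟨f, hfirm, hsss, hf0, hnss, hclm⟩

/-- Theorem 5.9: if `F` is strongly subregular at `(xb, yb)`, then the radius of strong
subregularity over calm, firmly calm, and firmly calm semismooth* perturbations all
equal the subregularity modulus. -/
theorem radsSR_eq_srgMod [CompleteSpace X] [CompleteSpace Y]
    (F : X → Set Y) (xb : X) (yb : Y) (h : yb ∈ F xb)
    (hss : StronglySubregular F xb yb) :
    radsSR (fun f => Calm f xb) F xb yb = srgMod F xb yb ∧
    radsSR (fun f => FirmlyCalm f xb) F xb yb = srgMod F xb yb ∧
    radsSR (fun f => FirmlyCalm f xb ∧ SemismoothStarFun f xb) F xb yb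
      = srgMod F xb yb := by
  classical
  obtain ⟨δ0, hδ0, hiso⟩ := hss.2
  have lower : ∀ P : (X → Y) → Prop, (∀ g, P g → Calm g xb) →
      srgMod F xb yb ≤ radsSR P F xb yb := by
    intro P hP
    apply le_sInf
    rintro r ⟨f, hPf, hf0, hns, rfl⟩
    by_contra hcon
    push_neg at hcon
    exact hns (stronglySubregular_addFun F xb yb h hδ0 hiso f (hP f hPf) hf0 hcon)
  have upper : ∀ P : (X → Y) → Prop,
      (∀ g, FirmlyCalm g xb ∧ SemismoothStarFun g xb → P g) →
      radsSR P F xb yb ≤ srgMod F xb yb := by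
    intro P hP
    by_cases htop : srgMod F xb yb = ⊤
    · rw [htop]; exact le_top
    by_contra hgt
    push_neg at hgt
    have hmin : srgMod F xb yb < min (radsSR P F xb yb) (srgMod F xb yb + 1) :=
      lt_min hgt (ENNReal.lt_add_right htop one_ne_zero)
    obtain ⟨c, hc1, hc2⟩ := exists_between hmin
    have hcne : c ≠ ⊤ := by
      have h1 : c < srgMod F xb yb + 1 := hc2.trans_le (min_le_right _ _)
      exact (h1.trans (ENNReal.add_lt_top.mpr
        ⟨lt_top_iff_ne_top.mpr htop, ENNReal.one_lt_top⟩)).ne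
    obtain ⟨f, hfc, hsss, hf0, hns, hclm⟩ := exists_destabilizer F xb yb h hc1 hcne
    have hle : radsSR P F xb yb ≤ clmMod f xb :=
      sInf_le ⟨f, hP f ⟨hfc, hsss⟩, hf0, hns, rfl⟩
    have hlec : radsSR P F xb yb ≤ c := hle.trans hclm
    exact absurd (hc2.trans_le (min_le_left _ _)) (not_lt.mpr hlec)
  exact ⟨le_antisymm (upper _ (fun g hg => hg.1.1)) (lower _ (fun g hg => hg)),
    le_antisymm (upper _ (fun g hg => hg.1)) (lower _ (fun g hg => hg.1)),
    le_antisymm (upper _ (fun g hg => hg)) (lower _ (fun g hg => hg.1.1))⟩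
end
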